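/- arXiv:math/0701788 — 2 statements merged into one kernel-verified Lean document; each statement's English description precedes it below -/
import Mathlib

section
/- Minimality of α-sets: Let x ∈ X, σ ∈ S^G_{<∞} with range c, and let α ≥ 1 be a countable ordinal. Then for every V^G_c-invariant set A ∈ Σ⁰_α(X) ∪ Π⁰_α(X): V^G_σ·x ⊆ A if and only if B_α(x,σ) ⊆ A. -/
open Set Pointwise

noncomputable section

/-- `S_∞`, the group of all permutations of `ℕ`. -/
abbrev Sinf : Type := Equiv.Perm ℕ

/-- The topology of pointwise convergence on `S_∞`. -/
instance SinfTopology : TopologicalSpace Sinf :=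
  TopologicalSpace.induced (fun g : Sinf => (g : ℕ → ℕ)) Pi.topologicalSpace

/-- The graph of the restriction of a permutation `g` to a finite set `d`. -/
def restr (g : Sinf) (d : Finset ℕ) : Set (ℕ × ℕ) := {p | p.1 ∈ d ∧ g p.1 = p.2}

/-- The domain of a partial map coded by its graph. -/
def pdom (σ : Set (ℕ × ℕ)) : Set ℕ := Prod.fst '' σ

/-- The range of a partial map coded by its graph. -/
def prng (σ : Set (ℕ × ℕ)) : Set ℕ := Prod.snd '' σ

/-- `S^G_{<∞}`: graphs of restrictions of elements of `G` to finite subsets of `ℕ`. -/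
def SGfin (G : Subgroup Sinf) : Set (Set (ℕ × ℕ)) :=
  {σ | ∃ g ∈ G, ∃ d : Finset ℕ, σ = restr g d}

/-- `V^G_σ`: the elements of `G` extending the partial bijection `σ`. -/
def Vb (G : Subgroup Sinf) (σ : Set (ℕ × ℕ)) : Set G :=
  {g : G | ∀ p ∈ σ, (g : Sinf) p.1 = p.2}

/-- `V^G_c`: the pointwise stabilizer of `c ⊆ ℕ` in `G`. -/
def Vc (G : Subgroup Sinf) (c : Set ℕ) : Set G :=
  {g : G | ∀ k ∈ c, (g : Sinf) k = k}

/-- The identity partial bijection on `c`. -/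
def idb (c : Set ℕ) : Set (ℕ × ℕ) := {p | p.1 ∈ c ∧ p.2 = p.1}

/-- The composition `σ ∘ f`, restricted to `f⁻¹[dom σ]`. -/
def compR (σ : Set (ℕ × ℕ)) (f : Sinf) : Set (ℕ × ℕ) := {p | (f p.1, p.2) ∈ σ}

/-- The composition `f ∘ σ`. -/
def compL (f : Sinf) (σ : Set (ℕ × ℕ)) : Set (ℕ × ℕ) := {p | (p.1, f⁻¹ p.2) ∈ σ}

/-- The Borel classes `Σ⁰_α(X)`: `Σ⁰_1(X)` consists of the open sets, and for `α > 1`,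
`Σ⁰_α(X)` consists of countable unions of sets whose complements lie in
`⋃_{1 ≤ β < α} Σ⁰_β(X)` (i.e. of sets from `⋃_{1 ≤ β < α} Π⁰_β(X)`). -/
def SigmaB (X : Type*) [TopologicalSpace X] (α : Ordinal.{0}) : Set (Set X) :=
  if α ≤ 1 then {s | IsOpen s}
  else {s | ∃ f : ℕ → Set X,
      (∀ n, ∃ β : {γ : Ordinal.{0} // γ < α}, 1 ≤ β.1 ∧ (f n)ᶜ ∈ SigmaB X β.1) ∧
      s = ⋃ n, f n}
termination_by α
decreasing_by exact β.2

/-- The Borel classes `Π⁰_α(X)`: complements of sets in `Σ⁰_α(X)`. -/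
def PiB (X : Type*) [TopologicalSpace X] (α : Ordinal.{0}) : Set (Set X) :=
  {s | sᶜ ∈ SigmaB X α}

section Action

variable (G : Subgroup Sinf) {X : Type*} [TopologicalSpace X] [MulAction G X]

/-- The image `S • x` of a point under a set of group elements. -/
def setOrb (S : Set G) (x : X) : Set X := (fun g : G => g • x) '' S

/-- The image `S • B` of a set under a set of group elements. -/
def setSmul (S : Set G) (B : Set X) : Set X := ⋃ g ∈ S, g • B

/-- The `1`-sets `B₁(x, σ)`. -/
def BsetOne (A : ℕ → Set X) (σ : Set (ℕ × ℕ)) (x : X) : Set X :=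
  (⋂ l, ⋂ (_ : (setOrb G (Vb G σ) x ∩ A l).Nonempty), setSmul G (Vc G (prng σ)) (A l)) ∩
    (⋂ l, ⋂ (_ : setOrb G (Vb G σ) x ∩ A l = ∅), (setSmul G (Vc G (prng σ)) (A l))ᶜ)

/-- The successor step of the recursion defining the `α`-sets. -/
def BsetSucc (prev : Set (ℕ × ℕ) → X → Set X) (σ : Set (ℕ × ℕ)) (x : X) : Set X :=
  (⋂ b : Finset ℕ, ⋂ (_ : pdom σ ⊆ ↑b),
      ⋃ σ' ∈ SGfin G, ⋃ (_ : σ ⊆ σ') (_ : pdom σ' = ↑b), prev σ' x) ∩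
    (⋂ a : Finset ℕ, ⋂ (_ : prng σ ⊆ ↑a),
      ⋃ σ' ∈ SGfin G, ⋃ (_ : σ ⊆ σ') (_ : prng σ' = ↑a), prev σ' x)

/-- The `α`-sets `B_α(x, σ)`, for `α ≥ 1` (the value at `α = 0` is junk). -/
def Bset (A : ℕ → Set X) (α : Ordinal.{0}) : Set (ℕ × ℕ) → X → Set X :=
  @Ordinal.limitRecOn (fun _ => Set (ℕ × ℕ) → X → Set X) α
    (fun _ _ => univ)
    (fun o ih => if o = 0 then BsetOne G A else BsetSucc G ih)
    (fun o _ ih σ x => ⋂ β : Ordinal.{0}, ⋂ (hβ : β < o), ⋂ (_ : 1 ≤ β), ih β hβ σ x)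

/-- The family `𝓑^x_{<α}` consisting of the basic open sets together with all
`β`-sets of `x` for `1 ≤ β < α`. -/
def BltFam (A : ℕ → Set X) (x : X) (α : Ordinal.{0}) : Set (Set X) :=
  {B | (∃ l, B = A l) ∨
    ∃ β : Ordinal.{0}, 1 ≤ β ∧ β < α ∧ ∃ σ ∈ SGfin G, B = Bset G A β σ x}

/-- `γ^G_*(x)`: the least countable ordinal `γ` such that for all `σ, δ ∈ S^G_{<∞}`
with equal ranges, if `B_α(x,σ) ≠ B_α(x,δ)` for some countable ordinal `α ≥ 1`,
then already `B_γ(x,σ) ≠ B_γ(x,δ)`. -/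
def gammaStar (A : ℕ → Set X) (x : X) : Ordinal :=
  sInf {γ : Ordinal.{0} | γ.card ≤ Cardinal.aleph0 ∧
    ∀ σ ∈ SGfin G, ∀ δ ∈ SGfin G, prng σ = prng δ →
      (∃ α : Ordinal.{0}, 1 ≤ α ∧ α.card ≤ Cardinal.aleph0 ∧
        Bset G A α σ x ≠ Bset G A α δ x) →
      Bset G A γ σ x ≠ Bset G A γ δ x}

end Action

/-- The topology on a subset `S ⊆ X` generated by the traces on `S` of the members
of the family `F`. -/
def traceTop {X : Type*} (S : Set X) (F : Set (Set X)) : TopologicalSpace S :=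
  TopologicalSpace.generateFrom {u : Set S | ∃ B ∈ F, u = Subtype.val ⁻¹' B}

/-- The space of closed subsets of `Y`. -/
def EffrosSpace (Y : Type*) [TopologicalSpace Y] := {K : Set Y // IsClosed K}

/-- The Effros Borel structure on the space of closed subsets of `Y`. -/
def effrosSigma (Y : Type*) [TopologicalSpace Y] : MeasurableSpace (EffrosSpace Y) :=
  MeasurableSpace.generateFrom
    {S | ∃ U : Set Y, IsOpen U ∧ S = {K : EffrosSpace Y | (K.1 ∩ U).Nonempty}}

section SinfTop

lemma continuous_coeSinf : Continuous (fun g : Sinf => (g : ℕ → ℕ)) :=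
  continuous_induced_dom

lemma isOpen_evalPi (k m : ℕ) : IsOpen {f : ℕ → ℕ | f k = m} := by
  show IsOpen ((fun f : ℕ → ℕ => f k) ⁻¹' {m})
  exact (isOpen_discrete {m}).preimage (continuous_apply k)

lemma isOpen_evalSinf (k m : ℕ) : IsOpen {g : Sinf | g k = m} :=
  (isOpen_evalPi k m).preimage continuous_coeSinf

lemma isClosed_evalSinf (k m : ℕ) : IsClosed {g : Sinf | g k = m} := by
  rw [← isOpen_compl_iff]
  have h : {g : Sinf | g k = m}ᶜ = ⋃ j, ⋃ (_ : j ≠ m), {g : Sinf | g k = j} := by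
    ext g
    simp only [mem_compl_iff, mem_setOf_eq, mem_iUnion]
    exact ⟨fun h => ⟨g k, h, rfl⟩, by rintro ⟨j, hj, rfl⟩; exact hj⟩
  rw [h]
  exact isOpen_iUnion fun j => isOpen_iUnion fun _ => isOpen_evalSinf k j

lemma continuous_discrete_fibers {Y : Type*} [TopologicalSpace Y] (f : Y → ℕ)
    (h : ∀ m, IsOpen (f ⁻¹' {m})) : Continuous f := by
  rw [continuous_def]
  intro s _
  have hs : f ⁻¹' s = ⋃ m ∈ s, f ⁻¹' {m} := by ext y; simp
  rw [hs]
  exact isOpen_biUnion fun m _ => h m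

instance : ContinuousMul Sinf := by
  constructor
  apply continuous_induced_rng.2
  apply continuous_pi
  intro k
  apply continuous_discrete_fibers
  intro m
  have heq : ((fun p : Sinf × Sinf => ((p.1 * p.2 : Sinf) : ℕ → ℕ)) ∘ id) ⁻¹' {f | f k = m} =
      ⋃ j, ({g : Sinf | g j = m} ×ˢ {g : Sinf | g k = j}) := by
    ext p
    simp only [Set.mem_preimage, Function.comp_apply, id_eq, Set.mem_setOf_eq, Set.mem_iUnion,
      Set.mem_prod, Equiv.Perm.coe_mul, Function.comp_apply]
    exact ⟨fun h => ⟨p.2 k, h, rfl⟩, by rintro ⟨j, hj, rfl⟩; exact hj⟩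
  show IsOpen ((fun p : Sinf × Sinf => ((p.1 * p.2 : Sinf) : ℕ → ℕ) k) ⁻¹' {m})
  have heq2 : (fun p : Sinf × Sinf => ((p.1 * p.2 : Sinf) : ℕ → ℕ) k) ⁻¹' {m} =
      ⋃ j, ({g : Sinf | g j = m} ×ˢ {g : Sinf | g k = j}) := by
    ext p
    simp only [Set.mem_preimage, Set.mem_singleton_iff, Equiv.Perm.coe_mul, Function.comp_apply,
      Set.mem_iUnion, Set.mem_prod, Set.mem_setOf_eq]
    exact ⟨fun h => ⟨p.2 k, h, rfl⟩, by rintro ⟨j, hj, rfl⟩; exact hj⟩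
  rw [heq2]
  exact isOpen_iUnion fun j => (isOpen_evalSinf j m).prod (isOpen_evalSinf k j)

instance : ContinuousInv Sinf := by
  constructor
  apply continuous_induced_rng.2
  apply continuous_pi
  intro k
  apply continuous_discrete_fibers
  intro m
  show IsOpen ((fun g : Sinf => ((g⁻¹ : Sinf) : ℕ → ℕ) k) ⁻¹' {m})
  have heq : (fun g : Sinf => ((g⁻¹ : Sinf) : ℕ → ℕ) k) ⁻¹' {m} = {g : Sinf | g m = k} := by
    ext g
    simp only [Set.mem_preimage, Set.mem_singleton_iff, Set.mem_setOf_eq]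
    constructor
    · intro h; rw [← h]; simp
    · intro h; rw [← h]; simp
  rw [heq]
  exact isOpen_evalSinf m k

instance : IsTopologicalGroup Sinf := {}

/-- The embedding of `Sinf` into a product witnessing Polishness. -/
def sinfEmbed (g : Sinf) : (ℕ → ℕ) × (ℕ → ℕ) := (⇑g, ⇑g⁻¹)

lemma continuous_sinfEmbed : Continuous sinfEmbed :=
  Continuous.prodMk continuous_coeSinf (continuous_coeSinf.comp continuous_inv)

lemma isOpen_fstEval (j m : ℕ) : IsOpen {p : (ℕ → ℕ) × (ℕ → ℕ) | p.1 j = m} :=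
  (isOpen_evalPi j m).preimage continuous_fst

lemma isOpen_sndEval (j m : ℕ) : IsOpen {p : (ℕ → ℕ) × (ℕ → ℕ) | p.2 j = m} :=
  (isOpen_evalPi j m).preimage continuous_snd

lemma isClosed_pairEval₁ (k : ℕ) : IsClosed {p : (ℕ → ℕ) × (ℕ → ℕ) | p.1 (p.2 k) = k} := by
  rw [← isOpen_compl_iff]
  have h : {p : (ℕ → ℕ) × (ℕ → ℕ) | p.1 (p.2 k) = k}ᶜ =
      ⋃ j, ⋃ m, ⋃ (_ : m ≠ k), ({p : (ℕ → ℕ) × (ℕ → ℕ) | p.2 k = j} ∩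
        {p : (ℕ → ℕ) × (ℕ → ℕ) | p.1 j = m}) := by
    ext p
    simp only [mem_compl_iff, mem_setOf_eq, mem_iUnion, mem_inter_iff]
    constructor
    · intro h; exact ⟨p.2 k, p.1 (p.2 k), h, rfl, rfl⟩
    · rintro ⟨j, m, hm, h1, h2⟩; rw [h1, h2]; exact hm
  rw [h]
  exact isOpen_iUnion fun j => isOpen_iUnion fun m => isOpen_iUnion fun _ =>
    (isOpen_sndEval k j).inter (isOpen_fstEval j m)

lemma isClosed_pairEval₂ (k : ℕ) : IsClosed {p : (ℕ → ℕ) × (ℕ → ℕ) | p.2 (p.1 k) = k} := by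
  rw [← isOpen_compl_iff]
  have h : {p : (ℕ → ℕ) × (ℕ → ℕ) | p.2 (p.1 k) = k}ᶜ =
      ⋃ j, ⋃ m, ⋃ (_ : m ≠ k), ({p : (ℕ → ℕ) × (ℕ → ℕ) | p.1 k = j} ∩
        {p : (ℕ → ℕ) × (ℕ → ℕ) | p.2 j = m}) := by
    ext p
    simp only [mem_compl_iff, mem_setOf_eq, mem_iUnion, mem_inter_iff]
    constructor
    · intro h; exact ⟨p.1 k, p.2 (p.1 k), h, rfl, rfl⟩
    · rintro ⟨j, m, hm, h1, h2⟩; rw [h1, h2]; exact hm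
  rw [h]
  exact isOpen_iUnion fun j => isOpen_iUnion fun m => isOpen_iUnion fun _ =>
    (isOpen_fstEval k j).inter (isOpen_sndEval j m)

lemma sinfEmbed_inducing : Topology.IsInducing sinfEmbed := by
  constructor
  refine le_antisymm (continuous_iff_le_induced.1 continuous_sinfEmbed) ?_
  calc TopologicalSpace.induced sinfEmbed instTopologicalSpaceProd
      ≤ TopologicalSpace.induced sinfEmbed
          (TopologicalSpace.induced Prod.fst Pi.topologicalSpace) :=
        induced_mono inf_le_left
    _ = TopologicalSpace.induced (fun g : Sinf => (g : ℕ → ℕ)) Pi.topologicalSpace := by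
        rw [induced_compose]; rfl
    _ = SinfTopology := rfl

lemma sinfEmbed_closedEmbedding : Topology.IsClosedEmbedding sinfEmbed := by
  refine ⟨⟨sinfEmbed_inducing, ?_⟩, ?_⟩
  · intro g h hgh
    exact Equiv.coe_fn_injective (congrArg Prod.fst hgh)
  · have hr : Set.range sinfEmbed =
        (⋂ k, {p : (ℕ → ℕ) × (ℕ → ℕ) | p.1 (p.2 k) = k}) ∩
          ⋂ k, {p : (ℕ → ℕ) × (ℕ → ℕ) | p.2 (p.1 k) = k} := by
      ext p
      simp only [mem_inter_iff, mem_iInter, mem_setOf_eq]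
      constructor
      · rintro ⟨g, rfl⟩
        exact ⟨fun k => by simp [sinfEmbed], fun k => by simp [sinfEmbed]⟩
      · rintro ⟨h1, h2⟩
        exact ⟨⟨p.1, p.2, fun k => h2 k, fun k => h1 k⟩, Prod.ext rfl rfl⟩
    rw [hr]
    exact IsClosed.inter (isClosed_iInter isClosed_pairEval₁) (isClosed_iInter isClosed_pairEval₂)

instance sinfPolish : PolishSpace Sinf := by
  haveI : PolishSpace (ℕ → ℕ) := inferInstance
  exact sinfEmbed_closedEmbedding.polishSpace

end SinfTop
section Gside

open Topology

variable {G : Subgroup Sinf}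

lemma mem_restr {g : Sinf} {d : Finset ℕ} {p : ℕ × ℕ} :
    p ∈ restr g d ↔ p.1 ∈ d ∧ g p.1 = p.2 := Iff.rfl

lemma pdom_restr (g : Sinf) (d : Finset ℕ) : pdom (restr g d) = ↑d := by
  ext k
  constructor
  · rintro ⟨p, hp, rfl⟩; exact hp.1
  · intro hk; exact ⟨(k, g k), ⟨hk, rfl⟩, rfl⟩

lemma prng_restr (g : Sinf) (d : Finset ℕ) : prng (restr g d) = ⇑g '' ↑d := by
  ext m
  constructor
  · rintro ⟨p, hp, rfl⟩; exact ⟨p.1, hp.1, hp.2⟩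
  · rintro ⟨k, hk, rfl⟩; exact ⟨(k, g k), ⟨hk, rfl⟩, rfl⟩

lemma restr_congr {g : Sinf} {d d' : Finset ℕ} (h : (d : Set ℕ) = ↑d') :
    restr g d = restr g d' := by
  have hm : ∀ k, k ∈ d ↔ k ∈ d' := fun k => by
    rw [← Finset.mem_coe, h, Finset.mem_coe]
  ext p
  simp only [mem_restr, hm]

lemma restr_mono {g : Sinf} {d d' : Finset ℕ} (h : d ⊆ d') : restr g d ⊆ restr g d' :=
  fun p hp => ⟨h hp.1, hp.2⟩

lemma mem_Vb_restr {h : G} {g : Sinf} {d : Finset ℕ} :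
    h ∈ Vb G (restr g d) ↔ ∀ k ∈ d, (h : Sinf) k = g k := by
  constructor
  · intro H k hk; exact H (k, g k) ⟨hk, rfl⟩
  · rintro H ⟨p1, p2⟩ ⟨hp1, hp2⟩; rw [← hp2]; exact H p1 hp1

lemma Vb_anti {σ σ' : Set (ℕ × ℕ)} (h : σ ⊆ σ') : Vb G σ' ⊆ Vb G σ :=
  fun g hg p hp => hg p (h hp)

lemma self_mem_Vb_restr (g : G) (d : Finset ℕ) : g ∈ Vb G (restr (↑g) d) :=
  fun _ hp => hp.2

lemma restr_eq_of_mem_Vb {h : G} {g : Sinf} {d : Finset ℕ} (hh : h ∈ Vb G (restr g d)) :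
    restr ((h : Sinf)) d = restr g d := by
  ext p
  simp only [mem_restr]
  rw [mem_Vb_restr] at hh
  constructor
  · rintro ⟨h1, h2⟩; exact ⟨h1, by rw [← h2, hh p.1 h1]⟩
  · rintro ⟨h1, h2⟩; exact ⟨h1, by rw [hh p.1 h1, h2]⟩

lemma Vb_nonempty {σ : Set (ℕ × ℕ)} (hσ : σ ∈ SGfin G) : (Vb G σ).Nonempty := by
  obtain ⟨g, hg, d, rfl⟩ := hσ
  exact ⟨⟨g, hg⟩, fun p hp => hp.2⟩

lemma isOpen_Vb {σ : Set (ℕ × ℕ)} (hσ : σ ∈ SGfin G) : IsOpen (Vb G σ) := by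
  obtain ⟨g, hg, d, rfl⟩ := hσ
  have he : Vb G (restr g d) = ⋂ k ∈ d, {h : G | (h : Sinf) k = g k} := by
    ext h
    simp only [Set.mem_iInter, Set.mem_setOf_eq, mem_Vb_restr]
  rw [he]
  exact isOpen_biInter_finset fun k _ =>
    (isOpen_evalSinf k (g k)).preimage continuous_subtype_val

lemma isClosed_Vb {σ : Set (ℕ × ℕ)} (hσ : σ ∈ SGfin G) : IsClosed (Vb G σ) := by
  obtain ⟨g, hg, d, rfl⟩ := hσ
  have he : Vb G (restr g d) = ⋂ k ∈ d, {h : G | (h : Sinf) k = g k} := by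
    ext h
    simp only [Set.mem_iInter, Set.mem_setOf_eq, mem_Vb_restr]
  rw [he]
  exact isClosed_biInter fun k _ =>
    (isClosed_evalSinf k (g k)).preimage continuous_subtype_val

lemma compR_restr (w : Sinf) (d : Finset ℕ) (f : Sinf) :
    compR (restr w d) f = restr (w * f) (d.image ⇑f⁻¹) := by
  ext p
  simp only [compR, mem_restr, Set.mem_setOf_eq, Finset.mem_image, Equiv.Perm.mul_apply]
  constructor
  · rintro ⟨h1, h2⟩
    refine ⟨⟨f p.1, h1, by simp⟩, h2⟩
  · rintro ⟨⟨k, hk, hfk⟩, h2⟩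
    have hfp : f p.1 = k := by rw [← hfk]; simp
    rw [hfp] at h2 ⊢
    exact ⟨hk, h2⟩

lemma compR_compR (σ : Set (ℕ × ℕ)) (f g : Sinf) :
    compR (compR σ f) g = compR σ (f * g) := rfl

lemma compR_one (σ : Set (ℕ × ℕ)) : compR σ 1 = σ := rfl

lemma compR_fix {w : Sinf} {d : Finset ℕ} {f : Sinf} (hf : ∀ k ∈ d, f k = k) :
    compR (restr w d) f = restr w d := by
  ext p
  simp only [compR, mem_restr, Set.mem_setOf_eq]
  constructor
  · rintro ⟨h1, h2⟩
    have hfix : f p.1 = p.1 := f.injective (hf _ h1)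
    rw [hfix] at h1 h2
    exact ⟨h1, h2⟩
  · rintro ⟨h1, h2⟩
    rw [hf _ h1]
    exact ⟨h1, h2⟩

lemma rightMul_preimage_Vb (τ : Set (ℕ × ℕ)) (u : G) :
    (fun h : G => h * u) ⁻¹' Vb G τ = Vb G (compR τ ((u : Sinf)⁻¹)) := by
  ext h
  simp only [Set.mem_preimage, Vb, Set.mem_setOf_eq, compR]
  constructor
  · intro H q hq
    have := H ((u : Sinf)⁻¹ q.1, q.2) hq
    simpa using this
  · intro H p hp
    have := H ((u : Sinf) p.1, p.2) (by simpa using hp)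
    simpa using this

end Gside
section Baire

open Topology

variable {G : Subgroup Sinf}

lemma polishG (hGclosed : IsClosed (G : Set Sinf)) : PolishSpace G :=
  hGclosed.polishSpace

lemma baireG (hGclosed : IsClosed (G : Set Sinf)) : BaireSpace G := by
  haveI : PolishSpace G := polishG hGclosed
  letI := TopologicalSpace.upgradeIsCompletelyMetrizable G
  infer_instance

lemma nonmeager_of_isOpen_nonempty [BaireSpace G] {U : Set G} (hU : IsOpen U)
    (hne : U.Nonempty) : ¬ IsMeagre U := by
  intro hm
  obtain ⟨z, hz1, hz2⟩ := (dense_of_mem_residual hm).exists_mem_open hU hne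
  exact hz1 hz2

lemma eq_empty_of_isOpen_isMeagre [BaireSpace G] {U : Set G} (hU : IsOpen U)
    (hm : IsMeagre U) : U = ∅ := by
  by_contra h
  exact nonmeager_of_isOpen_nonempty hU (Set.nonempty_iff_ne_empty.2 h) hm

lemma nonmeager_Vb [BaireSpace G] {τ : Set (ℕ × ℕ)} (hτ : τ ∈ SGfin G) :
    ¬ IsMeagre (Vb G τ) :=
  nonmeager_of_isOpen_nonempty (isOpen_Vb hτ) (Vb_nonempty hτ)

lemma IsMeagre.union' {s t : Set G} (hs : IsMeagre s) (ht : IsMeagre t) :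
    IsMeagre (s ∪ t) := by
  rw [IsMeagre, Set.compl_union]
  exact Filter.inter_mem hs ht

lemma exists_finset_basic_subset {U : Set G} (hU : IsOpen U) {g₀ : G} (hg₀ : g₀ ∈ U) :
    ∃ d : Finset ℕ, Vb G (restr (↑g₀) d) ⊆ U := by
  obtain ⟨V, hVo, hVU⟩ := isOpen_induced_iff.1 hU
  obtain ⟨W, hWo, hWV⟩ := isOpen_induced_iff.1 hVo
  have hg₀W : ((g₀ : Sinf) : ℕ → ℕ) ∈ W := by
    have : (g₀ : Sinf) ∈ V := by rw [← hVU] at hg₀; exact hg₀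
    rw [← hWV] at this; exact this
  obtain ⟨I, u, hIu, hpi⟩ := isOpen_pi_iff.1 hWo _ hg₀W
  refine ⟨I, fun h hh => ?_⟩
  rw [mem_Vb_restr] at hh
  have hhW : ((h : Sinf) : ℕ → ℕ) ∈ W := by
    apply hpi
    intro a ha
    rw [hh a ha]
    exact (hIu a ha).2
  rw [← hVU]
  show (h : Sinf) ∈ V
  rw [← hWV]
  exact hhW

lemma isMeagre_symmdiff_left {S u : Set G} (h : S =ᶠ[residual G] u) : IsMeagre (u \ S) := by
  rw [IsMeagre]
  refine Filter.mem_of_superset h ?_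
  intro z hz
  simp only [Set.mem_compl_iff, Set.mem_diff]
  rintro ⟨hzu, hzS⟩
  rw [show (z ∈ S) = (z ∈ u) from hz] at hzS
  exact hzS hzu

lemma isMeagre_symmdiff_right {S u : Set G} (h : S =ᶠ[residual G] u) : IsMeagre (S \ u) := by
  rw [IsMeagre]
  refine Filter.mem_of_superset h ?_
  intro z hz
  simp only [Set.mem_compl_iff, Set.mem_diff]
  rintro ⟨hzS, hzu⟩
  rw [show (z ∈ S) = (z ∈ u) from hz] at hzS
  exact hzu hzS

/-- Localization: a non-meager Baire-measurable subset of `V_τ` is comeager in some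
basic set `V_{τ₁}` with `τ₁ ⊇ τ`. -/
lemma localize [BaireSpace G] {τ : Set (ℕ × ℕ)} (hτ : τ ∈ SGfin G) {S : Set G}
    (hBM : BaireMeasurableSet S) (hsub : S ⊆ Vb G τ) (hnm : ¬ IsMeagre S) :
    ∃ τ₁ ∈ SGfin G, τ ⊆ τ₁ ∧ IsMeagre (Vb G τ₁ \ S) := by
  obtain ⟨u, huo, hsu⟩ := hBM.residualEq_isOpen
  have hmeq : IsMeagre (u \ S) := isMeagre_symmdiff_left hsu
  have hune : u.Nonempty := by
    rcases Set.eq_empty_or_nonempty u with h | h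
    · exfalso
      apply hnm
      have : S = S \ u := by rw [h]; simp
      rw [this]
      exact isMeagre_symmdiff_right hsu
    · exact h
  obtain ⟨g₀, hg₀⟩ := hune
  obtain ⟨d, hd⟩ := exists_finset_basic_subset huo hg₀
  -- V_{τ₀} ⊆ V_τ
  have hτ₀G : restr (↑g₀) d ∈ SGfin G := ⟨↑g₀, g₀.2, d, rfl⟩
  have hVsub : Vb G (restr (↑g₀) d) ⊆ Vb G τ := by
    have hm2 : IsMeagre (Vb G (restr (↑g₀) d) \ Vb G τ) := by
      refine (hmeq.mono ?_)
      intro z hz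
      exact ⟨hd hz.1, fun hzS => hz.2 (hsub hzS)⟩
    have hop : IsOpen (Vb G (restr (↑g₀) d) \ Vb G τ) :=
      (isOpen_Vb hτ₀G).sdiff (isClosed_Vb hτ)
    have := eq_empty_of_isOpen_isMeagre hop hm2
    intro z hz
    by_contra hz2
    exact absurd (Set.mem_diff_of_mem hz hz2) (by rw [this]; exact Set.notMem_empty z)
  have hg₀τ : g₀ ∈ Vb G τ := hVsub (self_mem_Vb_restr g₀ d)
  obtain ⟨w, hw, e, rfl⟩ := hτ
  refine ⟨restr (↑g₀) (d ∪ e), ⟨↑g₀, g₀.2, _, rfl⟩, ?_, ?_⟩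
  · rw [← restr_eq_of_mem_Vb hg₀τ]
    exact restr_mono Finset.subset_union_right
  · refine hmeq.mono ?_
    intro z hz
    refine ⟨hd ?_, hz.2⟩
    exact Vb_anti (restr_mono Finset.subset_union_left) hz.1

/-- Right translation preserves meagerness. -/
lemma isMeagre_rightMul_iff (u : G) (s : Set G) :
    IsMeagre ((fun h : G => h * u) ⁻¹' s) ↔ IsMeagre s := by
  constructor
  · intro h
    have h2 := h.preimage_of_isOpenMap (Homeomorph.mulRight u⁻¹).continuous
      (Homeomorph.mulRight u⁻¹).isOpenMap
    have : ((fun h : G => h * u⁻¹) ⁻¹' ((fun h : G => h * u) ⁻¹' s)) = s := by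
      ext z; simp
    rwa [show ⇑(Homeomorph.mulRight u⁻¹) = fun h : G => h * u⁻¹ from rfl, this] at h2
  · intro h
    exact h.preimage_of_isOpenMap (Homeomorph.mulRight u).continuous
      (Homeomorph.mulRight u).isOpenMap

end Baire
section Xside

open Topology

variable {G : Subgroup Sinf} {X : Type*} [TopologicalSpace X]

lemma SigmaB_of_le_one {α : Ordinal.{0}} (h : α ≤ 1) : SigmaB X α = {s | IsOpen s} := by
  rw [SigmaB]
  simp [h]

lemma SigmaB_of_gt_one {α : Ordinal.{0}} (h : ¬ α ≤ 1) :
    SigmaB X α = {s | ∃ f : ℕ → Set X,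
      (∀ n, ∃ β : {γ : Ordinal.{0} // γ < α}, 1 ≤ β.1 ∧ (f n)ᶜ ∈ SigmaB X β.1) ∧
      s = ⋃ n, f n} := by
  rw [SigmaB]
  simp [h]

variable [MulAction G X] [ContinuousSMul G X]

lemma continuous_orbitMap (z : X) : Continuous fun h : G => h • z :=
  continuous_id.smul continuous_const

lemma baireMeasurable_orbit (z : X) : ∀ α : Ordinal.{0}, ∀ D ∈ SigmaB X α,
    BaireMeasurableSet {h : G | h • z ∈ D} := by
  intro α
  induction α using Ordinal.induction with
  | h α ih =>
    intro D hD
    by_cases hle : α ≤ 1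
    · rw [SigmaB_of_le_one hle] at hD
      exact (hD.preimage (continuous_orbitMap z)).baireMeasurableSet
    · rw [SigmaB_of_gt_one hle] at hD
      obtain ⟨f, hf, rfl⟩ := hD
      have : {h : G | h • z ∈ ⋃ n, f n} = ⋃ n, {h : G | h • z ∈ f n} := by
        ext h; simp
      rw [this]
      refine BaireMeasurableSet.iUnion fun n => ?_
      obtain ⟨β, hβ1, hβ2⟩ := hf n
      have he : {h : G | h • z ∈ f n} = {h : G | h • z ∈ (f n)ᶜ}ᶜ := by
        ext h; simp
      rw [he]
      exact (ih β.1 β.2 _ hβ2).compl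

lemma mem_setSmul {S : Set G} {B : Set X} {z : X} :
    z ∈ setSmul G S B ↔ ∃ g ∈ S, z ∈ g • B := by
  rw [setSmul, Set.mem_iUnion₂]
  exact exists_congr fun g => by rw [exists_prop]

lemma mem_setOrb {S : Set G} {z : X} {x : X} :
    z ∈ setOrb G S x ↔ ∃ g ∈ S, g • x = z := by
  simp [setOrb]

variable (A : ℕ → Set X)

lemma Bset_succ (o : Ordinal.{0}) :
    Bset G A (Order.succ o) = if o = 0 then BsetOne G A else BsetSucc G (Bset G A o) := by
  unfold Bset
  rw [Ordinal.limitRecOn_succ]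

lemma Bset_one : Bset G A 1 = BsetOne G A := by
  have h1 : (1 : Ordinal.{0}) = Order.succ 0 := by
    rw [← Ordinal.add_one_eq_succ, zero_add]
  rw [h1, Bset_succ]
  simp

lemma Bset_succ' {o : Ordinal.{0}} (ho : o ≠ 0) :
    Bset G A (Order.succ o) = BsetSucc G (Bset G A o) := by
  rw [Bset_succ]
  simp [ho]

lemma Bset_limit {o : Ordinal.{0}} (ho : Order.IsSuccLimit o) (σ : Set (ℕ × ℕ)) (x : X) :
    Bset G A o σ x = ⋂ β : Ordinal.{0}, ⋂ (_ : β < o), ⋂ (_ : 1 ≤ β), Bset G A β σ x := by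
  show Bset G A o σ x = _
  unfold Bset
  rw [Ordinal.limitRecOn_limit _ _ _ _ ho]

lemma BsetSucc_subset_self {σ : Set (ℕ × ℕ)} (hσ : σ ∈ SGfin G)
    (prev : Set (ℕ × ℕ) → X → Set X) (x : X) :
    BsetSucc G prev σ x ⊆ prev σ x := by
  obtain ⟨g, hg, d, rfl⟩ := hσ
  intro y hy
  have h1 := hy.1
  rw [Set.mem_iInter] at h1
  have h2 := h1 d
  rw [Set.mem_iInter] at h2
  have h3 := h2 (by rw [pdom_restr])
  simp only [Set.mem_iUnion] at h3
  obtain ⟨σ', hσ', hsub, hd, hyB⟩ := h3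
  obtain ⟨g', hg', d', rfl⟩ := hσ'
  have hdd : (d' : Set ℕ) = ↑d := by
    rw [← pdom_restr g' d', hd]
  have : restr g' d' = restr g d := by
    apply Set.Subset.antisymm
    · rintro ⟨p1, p2⟩ ⟨hp1, hp2⟩
      have hp1d : p1 ∈ d := by
        rw [← Finset.mem_coe, ← hdd, Finset.mem_coe]; exact hp1
      have : (p1, g p1) ∈ restr g' d' := hsub ⟨hp1d, rfl⟩
      exact ⟨hp1d, by rw [← hp2, this.2]⟩
    · exact hsub
  rwa [this] at hyB

lemma Bset_anti {σ : Set (ℕ × ℕ)} (hσ : σ ∈ SGfin G) (x : X) :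
    ∀ α β : Ordinal.{0}, 1 ≤ β → β ≤ α → Bset G A α σ x ⊆ Bset G A β σ x := by
  intro α
  induction α using Ordinal.induction with
  | h α ih =>
    intro β hβ1 hβα
    rcases Ordinal.zero_or_succ_or_isSuccLimit α with h0 | ⟨o, rfl⟩ | hlim
    · subst h0
      exact absurd (hβ1.trans hβα) (by simp)
    · rcases eq_or_ne β (Order.succ o) with rfl | hne
      · exact subset_rfl
      · have hβo : β ≤ o := Order.lt_succ_iff.1 (lt_of_le_of_ne hβα hne)
        have ho1 : (1 : Ordinal.{0}) ≤ o := hβ1.trans hβo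
        have ho0 : o ≠ 0 := by
          intro h; rw [h] at ho1; exact absurd ho1 (by simp)
        calc Bset G A (Order.succ o) σ x
            ⊆ Bset G A o σ x := by
              rw [Bset_succ' A ho0]
              exact BsetSucc_subset_self hσ _ x
          _ ⊆ Bset G A β σ x := ih o (Order.lt_succ o) β hβ1 hβo
    · rcases eq_or_ne β α with rfl | hne
      · exact subset_rfl
      · have hβlt : β < α := lt_of_le_of_ne hβα hne
        intro y hy
        rw [Bset_limit A hlim] at hy
        simp only [Set.mem_iInter] at hy
        exact hy β hβlt hβ1

lemma orbit_mem_BsetOne {σ : Set (ℕ × ℕ)} {x : X} {g : G} (hg : g ∈ Vb G σ) :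
    g • x ∈ BsetOne G A σ x := by
  constructor
  · rw [Set.mem_iInter]
    intro l
    rw [Set.mem_iInter]
    intro hl
    obtain ⟨z, hz1, hz2⟩ := hl
    rw [mem_setOrb] at hz1
    obtain ⟨h, hh, rfl⟩ := hz1
    rw [mem_setSmul]
    refine ⟨g * h⁻¹, ?_, ?_⟩
    · rintro k ⟨p, hp, rfl⟩
      have h1 : (h : Sinf) p.1 = p.2 := hh p hp
      have h2 : ((h : Sinf))⁻¹ p.2 = p.1 := by rw [← h1]; simp
      have h3 : (g : Sinf) p.1 = p.2 := hg p hp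
      show ((g * h⁻¹ : G) : Sinf) p.2 = p.2
      rw [show ((g * h⁻¹ : G) : Sinf) = (g : Sinf) * ((h : Sinf))⁻¹ by rfl]
      rw [Equiv.Perm.mul_apply, h2, h3]
    · have : g • x = (g * h⁻¹) • (h • x) := by
        rw [smul_smul]
        congr 1
        group
      rw [this]
      exact smul_mem_smul_set hz2
  · rw [Set.mem_iInter]
    intro l
    rw [Set.mem_iInter]
    intro hl
    intro hmem
    rw [mem_setSmul] at hmem
    obtain ⟨u, hu, hmem⟩ := hmem
    have h1 : (u⁻¹ * g) • x ∈ A l := by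
      have := Set.mem_smul_set_iff_inv_smul_mem.1 hmem
      rwa [← mul_smul] at this
    have h2 : u⁻¹ * g ∈ Vb G σ := by
      intro p hp
      have h3 : (g : Sinf) p.1 = p.2 := hg p hp
      have h4 : (u : Sinf) p.2 = p.2 := hu p.2 ⟨p, hp, rfl⟩
      have h5 : ((u : Sinf))⁻¹ p.2 = p.2 := by
        conv_lhs => rw [← h4]
        simp
      show ((u⁻¹ * g : G) : Sinf) p.1 = p.2
      rw [show ((u⁻¹ * g : G) : Sinf) = ((u : Sinf))⁻¹ * (g : Sinf) by rfl]
      rw [Equiv.Perm.mul_apply, h3, h5]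
    have : (u⁻¹ * g) • x ∈ setOrb G (Vb G σ) x ∩ A l :=
      ⟨mem_setOrb.2 ⟨u⁻¹ * g, h2, rfl⟩, h1⟩
    rw [hl] at this
    exact this

lemma orbit_subset_Bset (x : X) : ∀ α : Ordinal.{0}, 1 ≤ α →
    ∀ σ ∈ SGfin G, ∀ g ∈ Vb G σ, g • x ∈ Bset G A α σ x := by
  intro α
  induction α using Ordinal.induction with
  | h α ih =>
    intro hα1 σ hσ g hg
    rcases Ordinal.zero_or_succ_or_isSuccLimit α with h0 | ⟨o, rfl⟩ | hlim
    · subst h0; exact absurd hα1 (by simp)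
    · rcases eq_or_ne o 0 with rfl | ho0
      · rw [Bset_succ]
        simp only [if_pos rfl]
        exact orbit_mem_BsetOne A hg
      · rw [Bset_succ' A ho0]
        have ho1 : (1 : Ordinal.{0}) ≤ o := Ordinal.one_le_iff_ne_zero.2 ho0
        constructor
        · rw [Set.mem_iInter]
          intro b
          rw [Set.mem_iInter]
          intro hb
          simp only [Set.mem_iUnion]
          refine ⟨restr (↑g) b, ⟨↑g, g.2, b, rfl⟩, ?_, by rw [pdom_restr], ?_⟩
          · intro p hp
            exact ⟨hb ⟨p, hp, rfl⟩, hg p hp⟩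
          · exact ih o (Order.lt_succ o) ho1 _ ⟨↑g, g.2, b, rfl⟩ g (self_mem_Vb_restr g b)
        · rw [Set.mem_iInter]
          intro a
          rw [Set.mem_iInter]
          intro ha
          simp only [Set.mem_iUnion]
          refine ⟨restr (↑g) (a.image ⇑((g : Sinf))⁻¹), ⟨↑g, g.2, _, rfl⟩, ?_, ?_, ?_⟩
          · intro p hp
            have h1 : (g : Sinf) p.1 = p.2 := hg p hp
            refine ⟨?_, h1⟩
            simp only [Finset.mem_image]
            exact ⟨p.2, by exact_mod_cast ha ⟨p, hp, rfl⟩, by rw [← h1]; simp⟩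
          · rw [prng_restr]
            ext m
            simp only [Finset.coe_image, Set.mem_image, Finset.mem_coe]
            constructor
            · rintro ⟨k, ⟨m', hm', rfl⟩, rfl⟩
              simpa using hm'
            · intro hm
              exact ⟨((g : Sinf))⁻¹ m, ⟨m, hm, rfl⟩, by simp⟩
          · exact ih o (Order.lt_succ o) ho1 _ ⟨↑g, g.2, _, rfl⟩ g
              (self_mem_Vb_restr g _)
    · rw [Bset_limit A hlim]
      rw [Set.mem_iInter]
      intro β
      rw [Set.mem_iInter]
      intro hβ
      rw [Set.mem_iInter]
      intro hβ1
      exact ih β hβ hβ1 σ hσ g hg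

end Xside
section Main

open Topology

/-- The key mutual minimality statement, proved by induction on `α`. -/
theorem minim (G : Subgroup Sinf) (hGclosed : IsClosed (G : Set Sinf))
    {X : Type*} [TopologicalSpace X] [MulAction G X] [ContinuousSMul G X]
    (A : ℕ → Set X) (hbasis : TopologicalSpace.IsTopologicalBasis (Set.range A)) (x : X) :
    ∀ α : Ordinal.{0}, 1 ≤ α → ∀ σ ∈ SGfin G, ∀ τ ∈ SGfin G, pdom τ = prng σ →
      (∀ D ∈ SigmaB X α,
        (∀ g ∈ Vb G σ, ¬ IsMeagre (Vb G τ ∩ {h : G | h • (g • x) ∈ D})) →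
        ∀ y ∈ Bset G A α σ x, ¬ IsMeagre (Vb G τ ∩ {h : G | h • y ∈ D})) ∧
      (∀ D ∈ PiB X α,
        (∀ g ∈ Vb G σ, IsMeagre (Vb G τ \ {h : G | h • (g • x) ∈ D})) →
        ∀ y ∈ Bset G A α σ x, IsMeagre (Vb G τ \ {h : G | h • y ∈ D})) := by
  haveI : BaireSpace G := baireG hGclosed
  intro α
  induction α using Ordinal.induction with
  | h α ih =>
  intro hα1 σ hσ τ hτ hpr
  by_cases hle : α ≤ 1
  -- ======================== BASE CASE α = 1 ========================
  · have hα : α = 1 := le_antisymm hle hα1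
    subst hα
    constructor
    · -- Σ⁰₁ : open sets
      intro D hD horb y hy
      rw [SigmaB_of_le_one le_rfl] at hD
      rw [Bset_one] at hy
      set D' : Set X := {z : X | ∃ u ∈ Vb G τ, u • z ∈ D} with hD'def
      have hD'open : IsOpen D' := by
        have : D' = ⋃ u ∈ Vb G τ, (fun z : X => u • z) ⁻¹' D := by
          ext z; simp [hD'def]
        rw [this]
        exact isOpen_biUnion fun u _ => hD.preimage (continuous_const_smul u)
      have claim1 : ∀ z : X, z ∈ D' → ¬ IsMeagre (Vb G τ ∩ {h : G | h • z ∈ D}) := by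
        rintro z ⟨u, hu, huz⟩
        exact nonmeager_of_isOpen_nonempty
          ((isOpen_Vb hτ).inter (hD.preimage (continuous_orbitMap z))) ⟨u, hu, huz⟩
      have claim2 : ∀ z : X, ¬ IsMeagre (Vb G τ ∩ {h : G | h • z ∈ D}) → z ∈ D' := by
        intro z hz
        rcases Set.eq_empty_or_nonempty (Vb G τ ∩ {h : G | h • z ∈ D}) with he | hne
        · exact absurd (by rw [he]; exact IsMeagre.empty) hz
        · obtain ⟨u, hu1, hu2⟩ := hne
          exact ⟨u, hu1, hu2⟩
      have hstab : ∀ v ∈ Vc G (prng σ), ∀ z ∈ D', v • z ∈ D' := by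
        rintro v hv z ⟨u, hu, huz⟩
        refine ⟨u * v⁻¹, ?_, ?_⟩
        · intro p hp
          have hp1 : p.1 ∈ prng σ := by rw [← hpr]; exact ⟨p, hp, rfl⟩
          have hv1 : (v : Sinf) p.1 = p.1 := hv p.1 hp1
          have hv2 : ((v : Sinf))⁻¹ p.1 = p.1 := by conv_lhs => rw [← hv1]; simp
          show ((u * v⁻¹ : G) : Sinf) p.1 = p.2
          rw [show ((u * v⁻¹ : G) : Sinf) = (u : Sinf) * ((v : Sinf))⁻¹ by rfl,
            Equiv.Perm.mul_apply, hv2]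
          exact hu p hp
        · have : (u * v⁻¹) • (v • z) = u • z := by
            rw [smul_smul]
            congr 1
            group
          rw [this]
          exact huz
      obtain ⟨g₀, hg₀⟩ := Vb_nonempty hσ
      have hg₀D' : g₀ • x ∈ D' := claim2 _ (horb g₀ hg₀)
      obtain ⟨v, ⟨l, rfl⟩, hzl, hlsub⟩ := hbasis.exists_subset_of_mem_open hg₀D' hD'open
      have hmeet : (setOrb G (Vb G σ) x ∩ A l).Nonempty :=
        ⟨g₀ • x, mem_setOrb.2 ⟨g₀, hg₀, rfl⟩, hzl⟩
      have h1 := hy.1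
      rw [Set.mem_iInter] at h1
      have h2 := h1 l
      rw [Set.mem_iInter] at h2
      have h3 := h2 hmeet
      rw [mem_setSmul] at h3
      obtain ⟨v, hv, hyv⟩ := h3
      obtain ⟨w, hw, rfl⟩ := hyv
      exact claim1 _ (hstab v hv w (hlsub hw))
    · -- Π⁰₁ : closed sets
      intro D hD horb y hy
      have hDc : IsOpen Dᶜ := by
        have : Dᶜ ∈ SigmaB X 1 := hD
        rwa [SigmaB_of_le_one le_rfl] at this
      rw [Bset_one] at hy
      have horb' : ∀ g ∈ Vb G σ, ∀ h ∈ Vb G τ, h • (g • x) ∈ D := by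
        intro g hg h hh
        by_contra hc
        have hopen : IsOpen (Vb G τ \ {u : G | u • (g • x) ∈ D}) := by
          have : Vb G τ \ {u : G | u • (g • x) ∈ D} =
              Vb G τ ∩ {u : G | u • (g • x) ∈ Dᶜ} := by
            ext u; simp [Set.mem_diff]
          rw [this]
          exact (isOpen_Vb hτ).inter (hDc.preimage (continuous_orbitMap _))
        have := eq_empty_of_isOpen_isMeagre hopen (horb g hg)
        have hmem : h ∈ Vb G τ \ {u : G | u • (g • x) ∈ D} := ⟨hh, hc⟩
        rw [this] at hmem
        exact hmem
      have hempty : Vb G τ \ {h : G | h • y ∈ D} = ∅ := by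
        rw [Set.eq_empty_iff_forall_notMem]
        rintro h₀ ⟨hh₀, hh₀2⟩
        -- h₀ • y ∈ Dᶜ; (D'')ᶜ open around y
        have hyD'' : y ∈ {z : X | ∃ u ∈ Vb G τ, u • z ∈ Dᶜ} := ⟨h₀, hh₀, hh₀2⟩
        have hopen : IsOpen {z : X | ∃ u ∈ Vb G τ, u • z ∈ Dᶜ} := by
          have : {z : X | ∃ u ∈ Vb G τ, u • z ∈ Dᶜ} =
              ⋃ u ∈ Vb G τ, (fun z : X => u • z) ⁻¹' Dᶜ := by
            ext z; simp
          rw [this]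
          exact isOpen_biUnion fun u _ => hDc.preimage (continuous_const_smul u)
        obtain ⟨v, ⟨l, rfl⟩, hzl, hlsub⟩ := hbasis.exists_subset_of_mem_open hyD'' hopen
        have hdisj : setOrb G (Vb G σ) x ∩ A l = ∅ := by
          rw [Set.eq_empty_iff_forall_notMem]
          rintro z ⟨hz1, hz2⟩
          rw [mem_setOrb] at hz1
          obtain ⟨g, hg, rfl⟩ := hz1
          obtain ⟨u, hu, huz⟩ := hlsub hz2
          exact huz (horb' g hg u hu)
        have h1 := hy.2
        rw [Set.mem_iInter] at h1
        have h2 := h1 l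
        rw [Set.mem_iInter] at h2
        refine h2 hdisj (mem_setSmul.2 ⟨1, ?_, ?_⟩)
        · intro k _
          simp
        · rw [one_smul]
          exact hzl
      rw [hempty]
      exact IsMeagre.empty
  -- ======================== STEP CASE α ≥ 2 ========================
  · constructor
    · -- Σ⁰_α
      intro D hD horb y hy
      rw [SigmaB_of_gt_one hle] at hD
      obtain ⟨f, hf, rfl⟩ := hD
      obtain ⟨g₀, hg₀⟩ := Vb_nonempty hσ
      have hnm := horb g₀ hg₀
      have hex : ∃ n, ¬ IsMeagre (Vb G τ ∩ {h : G | h • (g₀ • x) ∈ f n}) := by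
        by_contra hall
        push_neg at hall
        apply hnm
        have hdec : Vb G τ ∩ {h : G | h • (g₀ • x) ∈ ⋃ n, f n} =
            ⋃ n, (Vb G τ ∩ {h : G | h • (g₀ • x) ∈ f n}) := by
          ext h
          simp only [Set.mem_inter_iff, Set.mem_setOf_eq, Set.mem_iUnion]
          tauto
        rw [hdec]
        exact isMeagre_iUnion fun n => hall n
      obtain ⟨n, hn⟩ := hex
      obtain ⟨β, hβ1, hβc⟩ := hf n
      have hβ0 : β.1 ≠ 0 := Ordinal.one_le_iff_ne_zero.1 hβ1
      have hBM : BaireMeasurableSet (Vb G τ ∩ {h : G | h • (g₀ • x) ∈ f n}) := by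
        refine (isOpen_Vb hτ).baireMeasurableSet.inter ?_
        have he : {h : G | h • (g₀ • x) ∈ f n} = {h : G | h • (g₀ • x) ∈ (f n)ᶜ}ᶜ := by
          ext h
          simp only [Set.mem_compl_iff, Set.mem_setOf_eq, not_not]
        rw [he]
        exact (baireMeasurable_orbit _ β.1 _ hβc).compl
      obtain ⟨τ₁, hτ₁G, hττ₁, hmg⟩ := localize hτ hBM Set.inter_subset_left hn
      have hVτ₁τ : Vb G τ₁ ⊆ Vb G τ := Vb_anti hττ₁
      have hmg1 : IsMeagre (Vb G τ₁ \ {h : G | h • (g₀ • x) ∈ f n}) :=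
        hmg.mono (by intro h hh; exact ⟨hh.1, fun hc => hh.2 hc.2⟩)
      obtain ⟨g₁s, hg₁G, e₁, hτ₁eq⟩ := hτ₁G
      obtain ⟨gσs, hgσG, dσ, hσeq⟩ := hσ
      -- translate by g₀ : get meagerness at x itself
      set ρ : Set (ℕ × ℕ) := compR τ₁ (g₀ : Sinf) with hρdef
      have hmg2 : IsMeagre (Vb G ρ \ {v : G | v • x ∈ f n}) := by
        refine (isMeagre_rightMul_iff g₀ _).1 ?_
        have heq : (fun h : G => h * g₀) ⁻¹' (Vb G ρ \ {v : G | v • x ∈ f n}) =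
            Vb G τ₁ \ {h : G | h • (g₀ • x) ∈ f n} := by
          rw [Set.preimage_diff, rightMul_preimage_Vb, hρdef, compR_compR]
          have h1 : compR τ₁ ((g₀ : Sinf) * ((g₀ : Sinf))⁻¹) = τ₁ := by
            rw [mul_inv_cancel, compR_one]
          rw [h1]
          congr 1
          ext h
          simp only [Set.mem_preimage, Set.mem_setOf_eq, mul_smul]
        rw [heq]
        exact hmg1
      -- enlarge the domain
      set b : Finset ℕ := dσ ∪ e₁.image ⇑((g₀ : Sinf))⁻¹ with hbdef
      have hρr : ρ = restr (g₁s * (g₀ : Sinf)) (e₁.image ⇑((g₀ : Sinf))⁻¹) := by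
        rw [hρdef, hτ₁eq, compR_restr]
      set ρt : Set (ℕ × ℕ) := restr (g₁s * (g₀ : Sinf)) b with hρtdef
      have hρρt : ρ ⊆ ρt := by
        rw [hρr, hρtdef]
        exact restr_mono Finset.subset_union_right
      have hmg3 : IsMeagre (Vb G ρt \ {v : G | v • x ∈ f n}) :=
        hmg2.mono (by intro h hh; exact ⟨Vb_anti hρρt hh.1, hh.2⟩)
      -- get σ'' from the "domain" half of BsetSucc
      have hy2 : y ∈ Bset G A (Order.succ β.1) σ x :=
        Bset_anti A ⟨gσs, hgσG, dσ, hσeq⟩ x α (Order.succ β.1)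
          (hβ1.trans (Order.le_succ β.1)) (Order.succ_le_of_lt β.2) hy
      rw [Bset_succ' A hβ0] at hy2
      have hc1 := hy2.1
      rw [Set.mem_iInter] at hc1
      have hc2 := hc1 b
      rw [Set.mem_iInter] at hc2
      have hpdσ : pdom σ ⊆ (b : Set ℕ) := by
        rw [hσeq, pdom_restr, hbdef]
        intro k hk
        simp only [Finset.coe_union, Set.mem_union, Finset.mem_coe]
        exact Or.inl hk
      have hc3 := hc2 hpdσ
      simp only [Set.mem_iUnion] at hc3
      obtain ⟨σ'', hσ''G, hσσ'', hpd'', hyβ⟩ := hc3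
      obtain ⟨g₂s, hg₂G, d₂, hσ''eq⟩ := hσ''G
      have hσ''b : σ'' = restr g₂s b := by
        rw [hσ''eq]
        apply restr_congr
        rw [← pdom_restr g₂s d₂, ← hσ''eq, hpd'']
      -- τ₂
      set τ₂ : Set (ℕ × ℕ) := compR ρt (g₂s⁻¹) with hτ₂def
      have hτ₂r : τ₂ = restr (g₁s * (g₀ : Sinf) * g₂s⁻¹) (b.image ⇑g₂s) := by
        rw [hτ₂def, hρtdef, compR_restr, inv_inv]
      have hτ₂G : τ₂ ∈ SGfin G := by
        rw [hτ₂r]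
        exact ⟨_, mul_mem (mul_mem hg₁G g₀.2) (inv_mem hg₂G), _, rfl⟩
      have hpd₂ : pdom τ₂ = prng σ'' := by
        rw [hτ₂r, pdom_restr, hσ''b, prng_restr, Finset.coe_image]
      -- the orbit of σ'' is contained in the Vaught-star set
      have horb'' : ∀ h ∈ Vb G σ'', IsMeagre (Vb G τ₂ \ {u : G | u • (h • x) ∈ f n}) := by
        intro h hh
        have hfix : ∀ k ∈ b, (g₂s⁻¹ * (h : Sinf)) k = k := by
          intro k hk
          have : (h : Sinf) k = g₂s k := by
            rw [hσ''b] at hh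
            exact mem_Vb_restr.1 hh k hk
          rw [Equiv.Perm.mul_apply, this]
          simp
        have hcomp : compR τ₂ (h : Sinf) = ρt := by
          rw [hτ₂def, compR_compR, hρtdef, compR_fix hfix]
        have hpre : Vb G τ₂ \ {u : G | u • (h • x) ∈ f n} =
            (fun u : G => u * h) ⁻¹' (Vb G ρt \ {v : G | v • x ∈ f n}) := by
          rw [Set.preimage_diff, rightMul_preimage_Vb, ← hcomp, compR_compR]
          have h1 : (h : Sinf) * ((h : Sinf))⁻¹ = 1 := by group
          rw [h1, compR_one]
          congr 1
          ext u
          simp only [Set.mem_preimage, Set.mem_setOf_eq, mul_smul]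
        rw [hpre]
        exact (isMeagre_rightMul_iff h _).2 hmg3
      -- τ ⊆ τ₂
      have hττ₂ : τ ⊆ τ₂ := by
        rintro ⟨k, m⟩ hkm
        have hk : k ∈ prng σ := by rw [← hpr]; exact ⟨(k, m), hkm, rfl⟩
        rw [hσeq, prng_restr] at hk
        obtain ⟨j, hj, hjk⟩ := hk
        have hjb : j ∈ b := by
          rw [hbdef]
          exact Finset.mem_union_left _ hj
        have hjσ : (j, k) ∈ σ := by rw [hσeq]; exact ⟨hj, hjk⟩
        have hg₂j : g₂s j = k := by
          have := hσσ'' hjσ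
          rw [hσ''b] at this
          exact this.2
        have hg₀j : (g₀ : Sinf) j = k := hg₀ (j, k) hjσ
        have hg₁k : g₁s k = m := by
          have hself : (⟨g₁s, hg₁G⟩ : G) ∈ Vb G τ₁ := by
            rw [hτ₁eq]
            exact self_mem_Vb_restr ⟨g₁s, hg₁G⟩ e₁
          exact Vb_anti hττ₁ hself (k, m) hkm
        rw [hτ₂r]
        refine ⟨?_, ?_⟩
        · simp only [Finset.mem_image]
          exact ⟨j, hjb, hg₂j⟩
        · show (g₁s * (g₀ : Sinf) * g₂s⁻¹) k = m
          rw [show (g₁s * (g₀ : Sinf) * g₂s⁻¹) k = g₁s ((g₀ : Sinf) (g₂s⁻¹ k)) by rfl]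
          rw [← hg₂j]
          rw [show g₂s⁻¹ (g₂s j) = j by simp]
          rw [hg₀j, hg₁k]
      -- apply the induction hypothesis (Π side) at β
      have hmin := (ih β.1 β.2 hβ1 σ'' ⟨g₂s, hg₂G, d₂, hσ''eq⟩ τ₂ hτ₂G hpd₂).2
      have hyfn : IsMeagre (Vb G τ₂ \ {u : G | u • y ∈ f n}) :=
        hmin (f n) hβc horb'' y hyβ
      -- conclusion
      intro hcon
      apply nonmeager_Vb hτ₂G
      refine (hyfn.union' hcon).mono ?_
      intro u hu
      by_cases hufn : u • y ∈ f n
      · exact Or.inr ⟨Vb_anti hττ₂ hu, Set.mem_iUnion.2 ⟨n, hufn⟩⟩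
      · exact Or.inl ⟨hu, hufn⟩
    · -- Π⁰_α
      intro D hD horb y hy
      have hDc : Dᶜ ∈ SigmaB X α := hD
      rw [SigmaB_of_gt_one hle] at hDc
      obtain ⟨f, hf, hDceq⟩ := hDc
      by_contra hcon
      have hex : ∃ n, ¬ IsMeagre (Vb G τ ∩ {h : G | h • y ∈ f n}) := by
        by_contra hall
        push_neg at hall
        apply hcon
        have hdec : Vb G τ \ {h : G | h • y ∈ D} =
            ⋃ n, (Vb G τ ∩ {h : G | h • y ∈ f n}) := by
          ext h
          simp only [Set.mem_diff, Set.mem_setOf_eq, Set.mem_iUnion, Set.mem_inter_iff]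
          constructor
          · rintro ⟨h1, h2⟩
            have : h • y ∈ Dᶜ := h2
            rw [hDceq] at this
            obtain ⟨n, hn⟩ := Set.mem_iUnion.1 this
            exact ⟨n, h1, hn⟩
          · rintro ⟨n, h1, h2⟩
            refine ⟨h1, ?_⟩
            have : h • y ∈ Dᶜ := by
              rw [hDceq]
              exact Set.mem_iUnion.2 ⟨n, h2⟩
            exact this
        rw [hdec]
        exact isMeagre_iUnion fun n => hall n
      obtain ⟨n, hn⟩ := hex
      obtain ⟨β, hβ1, hβc⟩ := hf n
      have hβ0 : β.1 ≠ 0 := Ordinal.one_le_iff_ne_zero.1 hβ1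
      have hBM : BaireMeasurableSet (Vb G τ ∩ {h : G | h • y ∈ f n}) := by
        refine (isOpen_Vb hτ).baireMeasurableSet.inter ?_
        have he : {h : G | h • y ∈ f n} = {h : G | h • y ∈ (f n)ᶜ}ᶜ := by
          ext h
          simp only [Set.mem_compl_iff, Set.mem_setOf_eq, not_not]
        rw [he]
        exact (baireMeasurable_orbit _ β.1 _ hβc).compl
      obtain ⟨τ₁, hτ₁G, hττ₁, hmg⟩ := localize hτ hBM Set.inter_subset_left hn
      have hVτ₁τ : Vb G τ₁ ⊆ Vb G τ := Vb_anti hττ₁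
      have hmg1 : IsMeagre (Vb G τ₁ \ {h : G | h • y ∈ f n}) :=
        hmg.mono (by intro h hh; exact ⟨hh.1, fun hc => hh.2 hc.2⟩)
      obtain ⟨g₁s, hg₁G, e₁, hτ₁eq⟩ := hτ₁G
      -- get σ'' from the "range" half of BsetSucc at a := e₁
      have hy2 : y ∈ Bset G A (Order.succ β.1) σ x :=
        Bset_anti A hσ x α (Order.succ β.1)
          (hβ1.trans (Order.le_succ β.1)) (Order.succ_le_of_lt β.2) hy
      rw [Bset_succ' A hβ0] at hy2
      have hc1 := hy2.2
      rw [Set.mem_iInter] at hc1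
      have hc2 := hc1 e₁
      rw [Set.mem_iInter] at hc2
      have hprσ : prng σ ⊆ (e₁ : Set ℕ) := by
        rw [← hpr]
        intro k hk
        have : k ∈ pdom τ₁ := by
          obtain ⟨p, hp, rfl⟩ := hk
          exact ⟨p, hττ₁ hp, rfl⟩
        rwa [hτ₁eq, pdom_restr] at this
      have hc3 := hc2 hprσ
      simp only [Set.mem_iUnion] at hc3
      obtain ⟨σ'', hσ''G, hσσ'', hpr'', hyβ⟩ := hc3
      have hpd₁ : pdom τ₁ = prng σ'' := by
        rw [hτ₁eq, pdom_restr, hpr'']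
      have horb'' : ∀ h ∈ Vb G σ'', ¬ IsMeagre (Vb G τ₁ ∩ {u : G | u • (h • x) ∈ (f n)ᶜ}) := by
        intro h hh hmea
        have hhσ : h ∈ Vb G σ := Vb_anti hσσ'' hh
        have h1 := horb h hhσ
        apply nonmeager_Vb ⟨g₁s, hg₁G, e₁, hτ₁eq⟩
        refine (hmea.union' h1).mono ?_
        intro u hu
        by_cases hc : u • (h • x) ∈ D
        · refine Or.inl ⟨hu, ?_⟩
          intro hfn
          have : u • (h • x) ∈ Dᶜ := by
            rw [hDceq]
            exact Set.mem_iUnion.2 ⟨n, hfn⟩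
          exact this hc
        · exact Or.inr ⟨Vb_anti hττ₁ hu, hc⟩
      have hmin := (ih β.1 β.2 hβ1 σ'' hσ''G τ₁ ⟨g₁s, hg₁G, e₁, hτ₁eq⟩ hpd₁).1
      have hyc := hmin (f n)ᶜ hβc horb'' y hyβ
      apply hyc
      have heq : Vb G τ₁ ∩ {u : G | u • y ∈ (f n)ᶜ} = Vb G τ₁ \ {u : G | u • y ∈ f n} := by
        ext u
        simp [Set.mem_diff]
      rw [heq]
      exact hmg1

end Main
section Assemble

lemma inv_mem_Vc {G : Subgroup Sinf} {c : Set ℕ} {h : G} (hh : h ∈ Vc G c) : h⁻¹ ∈ Vc G c := by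
  intro k hk
  have h1 : (h : Sinf) k = k := hh k hk
  show ((h : Sinf))⁻¹ k = k
  conv_lhs => rw [← h1]
  simp

end Assemble

/-- Minimality of α-sets. -/
theorem alphaSet_minimality
    (G : Subgroup Sinf) (hGclosed : IsClosed (G : Set Sinf))
    {X : Type*} [TopologicalSpace X] [PolishSpace X] [MulAction G X] [ContinuousSMul G X]
    (A : ℕ → Set X) (hbasis : TopologicalSpace.IsTopologicalBasis (Set.range A))
    (hbasisInv : ∀ l, ∃ c : Finset ℕ, ∀ g ∈ Vc G (↑c : Set ℕ), g • A l = A l)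
    (x : X) (σ : Set (ℕ × ℕ)) (hσ : σ ∈ SGfin G)
    (α : Ordinal.{0}) (hα : 1 ≤ α) (hαc : α.card ≤ Cardinal.aleph0)
    (B : Set X) (hB : B ∈ SigmaB X α ∪ PiB X α)
    (hBinv : ∀ g ∈ Vc G (prng σ), g • B = B) :
    setOrb G (Vb G σ) x ⊆ B ↔ Bset G A α σ x ⊆ B := by
  haveI : BaireSpace G := baireG hGclosed
  have hfin : (prng σ).Finite := by
    obtain ⟨g, hg, d, rfl⟩ := hσ
    rw [prng_restr]
    exact (d.finite_toSet.image _)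
  set c' : Finset ℕ := hfin.toFinset with hc'def
  have hc' : (c' : Set ℕ) = prng σ := hfin.coe_toFinset
  set τ : Set (ℕ × ℕ) := restr 1 c' with hτdef
  have hτG : τ ∈ SGfin G := ⟨1, one_mem G, c', rfl⟩
  have hpdτ : pdom τ = prng σ := by rw [hτdef, pdom_restr]; exact hc'
  have hVbτ : Vb G τ = Vc G (prng σ) := by
    ext h
    rw [hτdef, mem_Vb_restr]
    constructor
    · intro H k hk
      have := H k (by rw [← Finset.mem_coe, hc'] at *; exact hk)
      simpa using this
    · intro H k hk
      have hk' : k ∈ prng σ := by rw [← hc']; exact_mod_cast hk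
      simpa using H k hk'
  have hmemB : ∀ (h : G), h ∈ Vc G (prng σ) → ∀ z : X, (h • z ∈ B ↔ z ∈ B) := by
    intro h hh z
    constructor
    · intro hz
      have : h⁻¹ • (h • z) ∈ h⁻¹ • B := smul_mem_smul_set hz
      rw [hBinv h⁻¹ (inv_mem_Vc hh), inv_smul_smul] at this
      exact this
    · intro hz
      rw [← hBinv h hh]
      exact smul_mem_smul_set hz
  have hDl : ∀ z : X, z ∈ B ↔ ¬ IsMeagre (Vb G τ ∩ {h : G | h • z ∈ B}) := by
    intro z
    constructor
    · intro hz
      have heq : Vb G τ ∩ {h : G | h • z ∈ B} = Vb G τ := by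
        apply Set.Subset.antisymm Set.inter_subset_left
        intro h hh
        refine ⟨hh, ?_⟩
        rw [hVbτ] at hh
        exact (hmemB h hh z).2 hz
      rw [heq]
      exact nonmeager_Vb hτG
    · intro hnm
      by_contra hz
      apply hnm
      have heq : Vb G τ ∩ {h : G | h • z ∈ B} = ∅ := by
        rw [Set.eq_empty_iff_forall_notMem]
        rintro h ⟨hh1, hh2⟩
        rw [hVbτ] at hh1
        exact hz ((hmemB h hh1 z).1 hh2)
      rw [heq]
      exact IsMeagre.empty
  have hSt : ∀ z : X, z ∈ B ↔ IsMeagre (Vb G τ \ {h : G | h • z ∈ B}) := by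
    intro z
    constructor
    · intro hz
      have heq : Vb G τ \ {h : G | h • z ∈ B} = ∅ := by
        rw [Set.eq_empty_iff_forall_notMem]
        rintro h ⟨hh1, hh2⟩
        rw [hVbτ] at hh1
        exact hh2 ((hmemB h hh1 z).2 hz)
      rw [heq]
      exact IsMeagre.empty
    · intro hme
      by_contra hz
      apply nonmeager_Vb hτG
      have heq : Vb G τ \ {h : G | h • z ∈ B} = Vb G τ := by
        apply Set.Subset.antisymm Set.diff_subset
        intro h hh
        refine ⟨hh, ?_⟩
        intro hc
        rw [hVbτ] at hh
        exact hz ((hmemB h hh z).1 hc)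
      rw [heq] at hme
      exact hme
  constructor
  · intro horb
    rcases hB with hBs | hBp
    · have hmin := (minim G hGclosed A hbasis x α hα σ hσ τ hτG hpdτ).1
      intro y hy
      have horb' : ∀ g ∈ Vb G σ, ¬ IsMeagre (Vb G τ ∩ {h : G | h • (g • x) ∈ B}) :=
        fun g hg => (hDl (g • x)).1 (horb (mem_setOrb.2 ⟨g, hg, rfl⟩))
      exact (hDl y).2 (hmin B hBs horb' y hy)
    · have hmin := (minim G hGclosed A hbasis x α hα σ hσ τ hτG hpdτ).2
      intro y hy
      have horb' : ∀ g ∈ Vb G σ, IsMeagre (Vb G τ \ {h : G | h • (g • x) ∈ B}) :=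
        fun g hg => (hSt (g • x)).1 (horb (mem_setOrb.2 ⟨g, hg, rfl⟩))
      exact (hSt y).2 (hmin B hBp horb' y hy)
  · intro hBset y hy
    rw [mem_setOrb] at hy
    obtain ⟨g, hg, rfl⟩ := hy
    exact hBset (orbit_subset_Bset A x α hα σ hσ g hg)
end
end

section
/- Disjointness criterion for local conjugacy classes in S_∞: Let f, g be conjugate permutations of ℕ (i.e. g = v f v⁻¹ for some permutation v) and let c ⊆ ℕ be a finite set. Then {h f h⁻¹ : h ∈ V_c} ∩ {h g h⁻¹ : h ∈ V_c} = ∅ if and only if there exist k ∈ c and an integer m ∈ ℤ such that (f^m(k) ∈ c or g^m(k) ∈ c) and f^m(k) ≠ g^m(k). -/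
open Set Pointwise

noncomputable section

namespace LocalConjAux

open Function

variable {X Y Z : Type}

lemma zpow_apply_eq_iff_dvd (σ : Equiv.Perm X) (x : X) (d : ℤ) :
    (σ ^ d) x = x ↔ (Function.minimalPeriod σ x : ℤ) ∣ d := by
  have hnat : ∀ n : ℕ, (σ ^ n) x = x ↔ Function.minimalPeriod σ x ∣ n := by
    intro n
    rw [← Function.isPeriodicPt_iff_minimalPeriod_dvd]
    rfl
  obtain ⟨n, rfl | rfl⟩ := d.eq_nat_or_neg
  · rw [zpow_natCast, hnat, Int.natCast_dvd_natCast]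
  · rw [zpow_neg, zpow_natCast, dvd_neg, Int.natCast_dvd_natCast, ← hnat n,
      Equiv.Perm.inv_eq_iff_eq, eq_comm]

lemma apply_zpow_eq_iff (σ : Equiv.Perm X) (x : X) (a b : ℤ) :
    (σ ^ a) x = (σ ^ b) x ↔ (σ ^ (a - b)) x = x := by
  have h1 : (σ ^ (a - b)) x = (σ ^ (-b)) ((σ ^ a) x) := by
    rw [← Equiv.Perm.mul_apply, ← zpow_add, neg_add_eq_sub]
  rw [h1, zpow_neg, Equiv.Perm.inv_eq_iff_eq, eq_comm]

lemma transfer {σ : Equiv.Perm X} {τ : Equiv.Perm Y} {x : X} {y : Y}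
    (h : Function.minimalPeriod σ x = Function.minimalPeriod τ y) (a b : ℤ) :
    (σ ^ a) x = (σ ^ b) x ↔ (τ ^ a) y = (τ ^ b) y := by
  rw [apply_zpow_eq_iff, apply_zpow_eq_iff, zpow_apply_eq_iff_dvd, zpow_apply_eq_iff_dvd, h]

lemma minPer_eq {σ : Equiv.Perm X} {τ : Equiv.Perm Y} {x : X} {y : Y}
    (h : ∀ n : ℕ, (σ ^ n) x = x ↔ (τ ^ n) y = y) :
    Function.minimalPeriod σ x = Function.minimalPeriod τ y := by
  apply Nat.dvd_antisymm
  · exact Function.IsPeriodicPt.minimalPeriod_dvd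
      ((h _).mpr (Function.isPeriodicPt_minimalPeriod τ y))
  · exact Function.IsPeriodicPt.minimalPeriod_dvd
      ((h _).mp (Function.isPeriodicPt_minimalPeriod σ x))

/-- The orbit setoid of a permutation. -/
def orbS (σ : Equiv.Perm X) : Setoid X where
  r a b := ∃ m : ℤ, (σ ^ m) a = b
  iseqv := by
    refine ⟨fun a => ⟨0, by simp⟩, ?_, ?_⟩
    · rintro a b ⟨m, rfl⟩
      exact ⟨-m, by rw [← Equiv.Perm.mul_apply, ← zpow_add, neg_add_cancel, zpow_zero,
        Equiv.Perm.one_apply]⟩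
    · rintro a b c ⟨m, rfl⟩ ⟨n, rfl⟩
      exact ⟨n + m, by rw [zpow_add, Equiv.Perm.mul_apply]⟩

lemma minPer_orbit {σ : Equiv.Perm X} {a b : X} (h : (orbS σ).r a b) :
    Function.minimalPeriod σ a = Function.minimalPeriod σ b := by
  obtain ⟨m, rfl⟩ := h
  apply minPer_eq
  intro n
  have comm : (σ ^ (n : ℕ)) ((σ ^ m) a) = (σ ^ m) ((σ ^ (n : ℕ)) a) := by
    rw [← Equiv.Perm.mul_apply, ← Equiv.Perm.mul_apply, ← zpow_natCast σ n, ← zpow_add,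
      ← zpow_add, add_comm]
  rw [eq_comm, comm]
  exact (Equiv.apply_eq_iff_eq (σ ^ m)).symm.trans eq_comm

lemma intertwine_zpow {σ : Equiv.Perm X} {τ : Equiv.Perm Y} {e : X ≃ Y}
    (h : ∀ x, e (σ x) = τ (e x)) : ∀ (m : ℤ) (x : X), e ((σ ^ m) x) = (τ ^ m) (e x) := by
  have hn : ∀ (n : ℕ) (x : X), e ((σ ^ n) x) = (τ ^ n) (e x) := by
    intro n
    induction n with
    | zero => intro x; simp
    | succ n ih =>
      intro x
      rw [pow_succ, Equiv.Perm.mul_apply, ih, h, ← Equiv.Perm.mul_apply, ← pow_succ]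
  intro m x
  obtain ⟨n, rfl | rfl⟩ := m.eq_nat_or_neg
  · rw [zpow_natCast]; exact hn n x
  · have h2 : (τ ^ ((n : ℤ))) ((τ ^ (-(n : ℤ))) (e x)) = e x := by
      rw [← Equiv.Perm.mul_apply, ← zpow_add, add_neg_cancel, zpow_zero, Equiv.Perm.one_apply]
    have h3 : (σ ^ ((n : ℤ))) ((σ ^ (-(n : ℤ))) x) = x := by
      rw [← Equiv.Perm.mul_apply, ← zpow_add, add_neg_cancel, zpow_zero, Equiv.Perm.one_apply]
    apply Equiv.injective (τ ^ ((n : ℤ)))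
    rw [h2, zpow_natCast, ← hn n, ← zpow_natCast σ n, h3]

lemma minPer_intertwine {σ : Equiv.Perm X} {τ : Equiv.Perm Y} {e : X ≃ Y}
    (h : ∀ x, e (σ x) = τ (e x)) (a : X) :
    Function.minimalPeriod τ (e a) = Function.minimalPeriod σ a := by
  refine (minPer_eq fun n => ?_).symm
  have key := intertwine_zpow h (n : ℤ) a
  rw [zpow_natCast, zpow_natCast] at key
  constructor
  · intro hx; rw [hx] at key; exact key.symm
  · intro hx; apply e.injective; rw [key, hx]

lemma qmap {σ : Equiv.Perm X} {τ : Equiv.Perm Y} (e : X ≃ Y)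
    (h : ∀ x, e (σ x) = τ (e x)) :
    ∃ Φ : Quotient (orbS σ) ≃ Quotient (orbS τ),
      ∀ q, Function.minimalPeriod τ (Φ q).out = Function.minimalPeriod σ q.out := by
  have hiff : ∀ a b : X, (orbS σ).r a b ↔ (orbS τ).r (e a) (e b) := by
    intro a b
    constructor
    · rintro ⟨m, rfl⟩; exact ⟨m, (intertwine_zpow h m a).symm⟩
    · rintro ⟨m, hm⟩; exact ⟨m, e.injective (by rw [intertwine_zpow h m a, hm])⟩
  refine ⟨Quotient.congr e hiff, ?_⟩
  intro q
  obtain ⟨a, rfl⟩ := q.exists_rep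
  have h1 : Quotient.congr e hiff (Quotient.mk (orbS σ) a) = Quotient.mk (orbS τ) (e a) := rfl
  rw [h1]
  have h2 := Quotient.mk_out (s := orbS τ) (e a)
  have h3 := Quotient.mk_out (s := orbS σ) a
  rw [minPer_orbit h2, minPer_orbit h3]
  exact minPer_intertwine h a


lemma lemA (σ : Equiv.Perm X) (τ : Equiv.Perm Y)
    (Φ : Quotient (orbS σ) ≃ Quotient (orbS τ))
    (hΦ : ∀ q, Function.minimalPeriod τ (Φ q).out = Function.minimalPeriod σ q.out) :
    ∃ e : X ≃ Y, ∀ x, e (σ x) = τ (e x) := by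
  classical
  have hch : ∀ x : X, ∃ m : ℤ, (σ ^ m) ((Quotient.mk (orbS σ) x).out) = x :=
    fun x => Quotient.mk_out (s := orbS σ) x
  choose m hm using hch
  set E : X → Y := fun x => (τ ^ m x) ((Φ (Quotient.mk (orbS σ) x)).out) with hE
  have hint : ∀ x, E (σ x) = τ (E x) := by
    intro x
    have hcls : Quotient.mk (orbS σ) (σ x) = Quotient.mk (orbS σ) x :=
      Quotient.sound ⟨-1, by rw [zpow_neg_one]; exact σ.symm_apply_apply x⟩
    have hmx := hm (σ x)
    rw [hcls] at hmx
    have hmx2 : (σ ^ m (σ x)) ((Quotient.mk (orbS σ) x).out)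
        = (σ ^ (1 + m x)) ((Quotient.mk (orbS σ) x).out) := by
      rw [hmx, zpow_add, zpow_one, Equiv.Perm.mul_apply, hm x]
    have h5 := (transfer ((hΦ (Quotient.mk (orbS σ) x)).symm) _ _).mp hmx2
    simp only [hE]
    rw [hcls, h5, zpow_add, zpow_one, Equiv.Perm.mul_apply]
  have hinj : Function.Injective E := by
    intro x x' hxx
    simp only [hE] at hxx
    have hΦeq : Φ (Quotient.mk (orbS σ) x) = Φ (Quotient.mk (orbS σ) x') := by
      rw [← Quotient.out_eq (Φ (Quotient.mk (orbS σ) x)),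
        ← Quotient.out_eq (Φ (Quotient.mk (orbS σ) x'))]
      exact Quotient.sound ⟨-(m x') + m x, by
        rw [zpow_add, Equiv.Perm.mul_apply, hxx, ← Equiv.Perm.mul_apply, ← zpow_add,
          neg_add_cancel, zpow_zero, Equiv.Perm.one_apply]⟩
    have hcls : Quotient.mk (orbS σ) x = Quotient.mk (orbS σ) x' := Φ.injective hΦeq
    rw [hcls] at hxx
    have h4 : (σ ^ m x) ((Quotient.mk (orbS σ) x').out)
        = (σ ^ m x') ((Quotient.mk (orbS σ) x').out) :=
      (transfer ((hΦ (Quotient.mk (orbS σ) x')).symm) (m x) (m x')).mpr hxx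
    have hmx := hm x
    rw [hcls] at hmx
    rw [← hmx, h4, hm x']
  have hsurj : Function.Surjective E := by
    intro y
    obtain ⟨n, hn⟩ := Quotient.mk_out (s := orbS τ) y
    set q : Quotient (orbS σ) := Φ.symm (Quotient.mk (orbS τ) y) with hq
    refine ⟨(σ ^ n) q.out, ?_⟩
    have hcls : Quotient.mk (orbS σ) ((σ ^ n) q.out) = q := by
      conv_rhs => rw [← Quotient.out_eq q]
      have hrel : (orbS σ).r q.out ((σ ^ n) q.out) := ⟨n, rfl⟩
      exact (Quotient.sound hrel).symm
    have hmx := hm ((σ ^ n) q.out)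
    rw [hcls] at hmx
    have h5 := (transfer ((hΦ q).symm) (m ((σ ^ n) q.out)) n).mp hmx
    have hΦq : Φ q = Quotient.mk (orbS τ) y := by rw [hq, Equiv.apply_symm_apply]
    simp only [hE]
    rw [hcls, h5, hΦq, hn]
  refine ⟨Equiv.ofBijective E ⟨hinj, hsurj⟩, fun x => ?_⟩
  exact hint x

section Subtype

lemma val_zpow (σ : Equiv.Perm X) (p : X → Prop) (hp : ∀ x, p (σ x) ↔ p x) (mm : ℤ) (x : {x // p x}) :
    (((σ.subtypePerm hp) ^ mm) x : X) = (σ ^ mm) (x : X) := by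
  rw [Equiv.Perm.subtypePerm_zpow]; rfl

lemma minPer_sub (σ : Equiv.Perm X) (p : X → Prop) (hp : ∀ x, p (σ x) ↔ p x) (x : {x // p x}) :
    Function.minimalPeriod (σ.subtypePerm hp) x = Function.minimalPeriod σ (x : X) := by
  apply minPer_eq
  intro n
  constructor
  · intro h
    have h2 := congrArg Subtype.val h
    rwa [← zpow_natCast (σ.subtypePerm hp), val_zpow, zpow_natCast] at h2
  · intro h
    apply Subtype.ext
    rw [← zpow_natCast (σ.subtypePerm hp), val_zpow, zpow_natCast]
    exact h

lemma p_zpow (σ : Equiv.Perm X) (p : X → Prop) (hp : ∀ x, p (σ x) ↔ p x) (mm : ℤ) (x : X) (hx : p x) : p ((σ ^ mm) x) := by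
  rw [← val_zpow σ p hp mm ⟨x, hx⟩]
  exact (((σ.subtypePerm hp) ^ mm) ⟨x, hx⟩).2

lemma subrel_of (σ : Equiv.Perm X) (p : X → Prop) (hp : ∀ x, p (σ x) ↔ p x) (a b : {x // p x}) (mm : ℤ) (hmm : (σ ^ mm) (a : X) = (b : X)) :
    ((σ.subtypePerm hp) ^ mm) a = b :=
  Subtype.ext (by rw [val_zpow]; exact hmm)

lemma qdec (σ : Equiv.Perm X) (p : X → Prop) (hp : ∀ x, p (σ x) ↔ p x) :
    ∃ Edec : (Quotient (orbS (σ.subtypePerm hp))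
        ⊕ Quotient (orbS (σ.subtypePerm (p := fun x => ¬ p x) (fun x => (hp x).not)))) ≃ Quotient (orbS σ),
      ∀ z, Function.minimalPeriod σ (Edec z).out =
        Sum.elim (fun q => Function.minimalPeriod (σ.subtypePerm hp) q.out)
          (fun q => Function.minimalPeriod (σ.subtypePerm (p := fun x => ¬ p x) (fun x => (hp x).not)) q.out) z := by
  classical
  set σ₁ := σ.subtypePerm hp with hσ₁
  set σ₂ := σ.subtypePerm (p := fun x => ¬ p x) (fun x => (hp x).not) with hσ₂
  have wd1 : ∀ a b : {x // p x}, (orbS σ₁).r a b →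
      Quotient.mk (orbS σ) (a : X) = Quotient.mk (orbS σ) (b : X) := by
    rintro a b ⟨mm, rfl⟩
    exact Quotient.sound ⟨mm, (val_zpow σ p hp mm a).symm⟩
  have wd2 : ∀ a b : {x // ¬ p x}, (orbS σ₂).r a b →
      Quotient.mk (orbS σ) (a : X) = Quotient.mk (orbS σ) (b : X) := by
    rintro a b ⟨mm, rfl⟩
    exact Quotient.sound ⟨mm, (val_zpow σ (fun x => ¬ p x) (fun x => (hp x).not) mm a).symm⟩
  set G : Quotient (orbS σ₁) ⊕ Quotient (orbS σ₂) → Quotient (orbS σ) :=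
    Sum.elim (Quotient.lift (fun a : {x // p x} => Quotient.mk (orbS σ) (a : X)) wd1)
      (Quotient.lift (fun a : {x // ¬ p x} => Quotient.mk (orbS σ) (a : X)) wd2) with hG
  have hGinj : Function.Injective G := by
    rintro (q | q) (q' | q') h
    · induction q using Quotient.ind with | _ a =>
      induction q' using Quotient.ind with | _ a' =>
      obtain ⟨mm, hmm⟩ := Quotient.exact (h : Quotient.mk (orbS σ) (a : X) = Quotient.mk (orbS σ) (a' : X))
      exact congrArg Sum.inl (Quotient.sound ⟨mm, subrel_of σ p hp a a' mm hmm⟩)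
    · induction q using Quotient.ind with | _ a =>
      induction q' using Quotient.ind with | _ a' =>
      obtain ⟨mm, hmm⟩ := Quotient.exact (h : Quotient.mk (orbS σ) (a : X) = Quotient.mk (orbS σ) (a' : X))
      exact absurd (hmm ▸ p_zpow σ p hp mm (a : X) a.2) a'.2
    · induction q using Quotient.ind with | _ a =>
      induction q' using Quotient.ind with | _ a' =>
      obtain ⟨mm, hmm⟩ := Quotient.exact (h : Quotient.mk (orbS σ) (a : X) = Quotient.mk (orbS σ) (a' : X))
      exact absurd (hmm ▸ p_zpow σ (fun x => ¬ p x) (fun x => (hp x).not) mm (a : X) a.2) (not_not.mpr a'.2)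
    · induction q using Quotient.ind with | _ a =>
      induction q' using Quotient.ind with | _ a' =>
      obtain ⟨mm, hmm⟩ := Quotient.exact (h : Quotient.mk (orbS σ) (a : X) = Quotient.mk (orbS σ) (a' : X))
      exact congrArg Sum.inr (Quotient.sound ⟨mm, subrel_of σ _ (fun x => (hp x).not) a a' mm hmm⟩)
  have hGsurj : Function.Surjective G := by
    intro q
    induction q using Quotient.ind with | _ x =>
    by_cases hx : p x
    · exact ⟨Sum.inl (Quotient.mk (orbS σ₁) ⟨x, hx⟩), rfl⟩
    · exact ⟨Sum.inr (Quotient.mk (orbS σ₂) ⟨x, hx⟩), rfl⟩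
  refine ⟨Equiv.ofBijective G ⟨hGinj, hGsurj⟩, ?_⟩
  rintro (q | q)
  · induction q using Quotient.ind with | _ a =>
    have h1 : Equiv.ofBijective G ⟨hGinj, hGsurj⟩ (Sum.inl (Quotient.mk (orbS σ₁) a))
        = Quotient.mk (orbS σ) (a : X) := rfl
    rw [h1]
    have h2 := Quotient.mk_out (s := orbS σ) (a : X)
    have h3 := Quotient.mk_out (s := orbS σ₁) a
    rw [minPer_orbit h2]
    simp only [Sum.elim_inl]
    rw [minPer_orbit h3, minPer_sub]
  · induction q using Quotient.ind with | _ a =>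
    have h1 : Equiv.ofBijective G ⟨hGinj, hGsurj⟩ (Sum.inr (Quotient.mk (orbS σ₂) a))
        = Quotient.mk (orbS σ) (a : X) := rfl
    rw [h1]
    have h2 := Quotient.mk_out (s := orbS σ) (a : X)
    have h3 := Quotient.mk_out (s := orbS σ₂) a
    rw [minPer_orbit h2]
    simp only [Sum.elim_inr]
    rw [minPer_orbit h3, minPer_sub]

end Subtype

lemma lemK {A A' B B' : Type} [Finite A] (pa : A → ℕ) (pa' : A' → ℕ) (pb : B → ℕ) (pb' : B' → ℕ)
    (E : A ⊕ A' ≃ B ⊕ B') (hE : ∀ z, Sum.elim pb pb' (E z) = Sum.elim pa pa' z)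
    (F : A ≃ B) (hF : ∀ a, pb (F a) = pa a) :
    ∃ E' : A' ≃ B', ∀ a, pb' (E' a) = pa' a := by
  classical
  have hfib : ∀ n : ℕ, Nonempty ({a' // pa' a' = n} ≃ {b' // pb' b' = n}) := by
    intro n
    have e1 : {z : A ⊕ A' // Sum.elim pa pa' z = n} ≃ {w : B ⊕ B' // Sum.elim pb pb' w = n} :=
      E.subtypeEquiv (fun z => by rw [hE z])
    have e2 : {z : A ⊕ A' // Sum.elim pa pa' z = n} ≃ {a // pa a = n} ⊕ {a' // pa' a' = n} :=
      Equiv.subtypeSum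
    have e3 : {w : B ⊕ B' // Sum.elim pb pb' w = n} ≃ {b // pb b = n} ⊕ {b' // pb' b' = n} :=
      Equiv.subtypeSum
    have hAB : Cardinal.mk {a // pa a = n} = Cardinal.mk {b // pb b = n} :=
      Cardinal.mk_congr (F.subtypeEquiv fun a => by rw [hF a])
    have hsum : Cardinal.mk {a // pa a = n} + Cardinal.mk {a' // pa' a' = n}
        = Cardinal.mk {b // pb b = n} + Cardinal.mk {b' // pb' b' = n} := by
      rw [Cardinal.add_def, Cardinal.add_def]
      exact Cardinal.mk_congr (e2.symm.trans (e1.trans e3))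
    rw [hAB] at hsum
    have hfin : Cardinal.mk {b // pb b = n} < Cardinal.aleph0 := by
      have : Finite B := Finite.of_equiv A F
      exact Cardinal.lt_aleph0_of_finite _
    have := Cardinal.eq_of_add_eq_add_left hsum hfin
    exact Cardinal.eq.mp this
  let fe : ∀ n, {a' // pa' a' = n} ≃ {b' // pb' b' = n} := fun n => (hfib n).some
  refine ⟨(Equiv.sigmaFiberEquiv pa').symm.trans
    ((Equiv.sigmaCongrRight fe).trans (Equiv.sigmaFiberEquiv pb')), fun a => ?_⟩
  exact ((fe (pa' a)) ⟨a, rfl⟩).2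

lemma shift (σ : Equiv.Perm ℕ) (a b : ℤ) (x : ℕ) :
    (σ ^ a) ((σ ^ b) x) = (σ ^ (a + b)) x := by
  rw [zpow_add, Equiv.Perm.mul_apply]

lemma main_construction (f g : Equiv.Perm ℕ) (v : Equiv.Perm ℕ) (hv : g = v * f * v⁻¹)
    (c : Finset ℕ)
    (H : ∀ k ∈ c, ∀ m : ℤ, ((f ^ m) k ∈ c ∨ (g ^ m) k ∈ c) → (f ^ m) k = (g ^ m) k) :
    ∃ w : Equiv.Perm ℕ, (∀ j ∈ c, w j = j) ∧ w * f * w⁻¹ = g := by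
  classical
  set C : Set ℕ := {x | ∃ km : ℕ × ℤ, km.1 ∈ c ∧ (f ^ km.2) km.1 = x} with hCdef
  set D : Set ℕ := {x | ∃ km : ℕ × ℤ, km.1 ∈ c ∧ (g ^ km.2) km.1 = x} with hDdef
  set w0 : ℕ → ℕ := fun x =>
    if h : x ∈ C then (g ^ (h.choose.2)) h.choose.1 else x with hw0def
  have keyw : ∀ k ∈ c, ∀ m : ℤ, w0 ((f ^ m) k) = (g ^ m) k := by
    intro k hk m
    have hmem : (f ^ m) k ∈ C := ⟨(k, m), hk, rfl⟩
    have hgoal : w0 ((f ^ m) k) = (g ^ (hmem.choose.2)) hmem.choose.1 := by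
      simp only [hw0def]
      rw [dif_pos hmem]
    rw [hgoal]
    obtain ⟨hk', he⟩ := hmem.choose_spec
    set k' := hmem.choose.1
    set m' := hmem.choose.2
    have h1 : (f ^ (m' - m)) k' = k := by
      have h0 : (f ^ (-m)) ((f ^ m') k') = (f ^ (-m)) ((f ^ m) k) := by rw [he]
      rw [shift, shift, neg_add_cancel, zpow_zero, Equiv.Perm.one_apply, neg_add_eq_sub] at h0
      exact h0
    have h2 : (g ^ (m' - m)) k' = k := by
      rw [← H k' hk' (m' - m) (Or.inl (by rw [h1]; exact hk))]
      exact h1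
    have h3 : (g ^ m) ((g ^ (m' - m)) k') = (g ^ m) k := by rw [h2]
    rwa [shift, show m + (m' - m) = m' by ring] at h3
  have hcC : ∀ k ∈ c, k ∈ C := by
    intro k hk
    exact ⟨(k, 0), hk, by simp⟩
  have hCinv : ∀ x, x ∈ C ↔ f x ∈ C := by
    intro x
    constructor
    · rintro ⟨⟨k, m⟩, hk, rfl⟩
      exact ⟨(k, 1 + m), hk, by rw [← shift f 1 m k, zpow_one]⟩
    · rintro ⟨⟨k, m⟩, hk, he⟩
      refine ⟨(k, -1 + m), hk, ?_⟩
      rw [← shift f (-1) m k, he, zpow_neg_one]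
      exact f.symm_apply_apply x
  have hDinv : ∀ x, x ∈ D ↔ g x ∈ D := by
    intro x
    constructor
    · rintro ⟨⟨k, m⟩, hk, rfl⟩
      exact ⟨(k, 1 + m), hk, by rw [← shift g 1 m k, zpow_one]⟩
    · rintro ⟨⟨k, m⟩, hk, he⟩
      refine ⟨(k, -1 + m), hk, ?_⟩
      rw [← shift g (-1) m k, he, zpow_neg_one]
      exact g.symm_apply_apply x
  -- w0 basic properties
  have hw0D : ∀ x ∈ C, w0 x ∈ D := by
    rintro x ⟨⟨k, m⟩, hk, rfl⟩
    rw [keyw k hk m]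
    exact ⟨(k, m), hk, rfl⟩
  have hw0inj : ∀ x ∈ C, ∀ y ∈ C, w0 x = w0 y → x = y := by
    rintro x ⟨⟨k, m⟩, hk, rfl⟩ y ⟨⟨k', m'⟩, hk', rfl⟩ hxy
    rw [keyw k hk m, keyw k' hk' m'] at hxy
    have h1 : (g ^ (m' - m)) k' = k := by
      have h0 : (g ^ (-m)) ((g ^ m) k) = (g ^ (-m)) ((g ^ m') k') := by rw [hxy]
      rw [shift, shift, neg_add_cancel, zpow_zero, Equiv.Perm.one_apply, neg_add_eq_sub] at h0
      exact h0.symm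
    have h2 : (f ^ (m' - m)) k' = k := by
      rw [H k' hk' (m' - m) (Or.inr (by rw [h1]; exact hk))]
      exact h1
    have h3 : (f ^ m) ((f ^ (m' - m)) k') = (f ^ m) k := by rw [h2]
    rw [shift, show m + (m' - m) = m' by ring] at h3
    exact h3.symm
  have hw0surj : ∀ y ∈ D, ∃ x ∈ C, w0 x = y := by
    rintro y ⟨⟨k, m⟩, hk, rfl⟩
    exact ⟨(f ^ m) k, ⟨(k, m), hk, rfl⟩, keyw k hk m⟩
  have hw0int : ∀ x ∈ C, w0 (f x) = g (w0 x) := by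
    rintro x ⟨⟨k, m⟩, hk, rfl⟩
    have h1 : f ((f ^ m) k) = (f ^ (1 + m)) k := by
      rw [← shift f 1 m k, zpow_one]
    rw [h1, keyw k hk (1 + m), keyw k hk m, ← shift g 1 m k, zpow_one]
  have hw0fix : ∀ j ∈ c, w0 j = j := by
    intro j hj
    have := keyw j hj 0
    simpa using this
  -- the subtype equivalence
  set w0e : {x // x ∈ C} ≃ {x // x ∈ D} :=
    Equiv.ofBijective (fun x : {x // x ∈ C} => (⟨w0 x.1, hw0D x.1 x.2⟩ : {x // x ∈ D}))
      ⟨fun a b h => Subtype.ext (hw0inj _ a.2 _ b.2 (congrArg Subtype.val h)),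
       by rintro ⟨y, hy⟩
          obtain ⟨x, hx, hw⟩ := hw0surj y hy
          exact ⟨⟨x, hx⟩, Subtype.ext hw⟩⟩ with hw0e
  set f₁ := f.subtypePerm (p := (· ∈ C)) (fun x => (hCinv x).symm) with hf₁
  set g₁ := g.subtypePerm (p := (· ∈ D)) (fun x => (hDinv x).symm) with hg₁
  set f₂ := f.subtypePerm (p := fun x => ¬ x ∈ C) (fun x => (hCinv x).symm.not) with hf₂
  set g₂ := g.subtypePerm (p := fun x => ¬ x ∈ D) (fun x => (hDinv x).symm.not) with hg₂
  have hw0eint : ∀ x : {x // x ∈ C}, w0e (f₁ x) = g₁ (w0e x) :=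
    fun x => Subtype.ext (hw0int x.1 x.2)
  have hvint : ∀ x : ℕ, v (f x) = g (v x) := by
    intro x
    rw [hv]
    simp [Equiv.Perm.mul_apply]
  obtain ⟨Ψ, hΨ⟩ := qmap v hvint
  obtain ⟨F, hF⟩ := qmap w0e hw0eint
  obtain ⟨decf, hdecf⟩ := qdec f (· ∈ C) (fun x => (hCinv x).symm)
  obtain ⟨decg, hdecg⟩ := qdec g (· ∈ D) (fun x => (hDinv x).symm)
  -- finiteness of the orbit quotient inside C
  have hfin : Finite (Quotient (orbS f₁)) := by
    have hsurjc : Function.Surjective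
        (fun k : {k // k ∈ c} => Quotient.mk (orbS f₁) ⟨k.1, hcC k.1 k.2⟩) := by
      intro q
      induction q using Quotient.ind with | _ x =>
      obtain ⟨⟨k, m⟩, hk, he⟩ := x.2
      refine ⟨⟨k, hk⟩, ?_⟩
      have hrel : (orbS f₁).r ⟨k, hcC k hk⟩ x := ⟨m, subrel_of f (· ∈ C) (fun x => (hCinv x).symm) _ _ m he⟩
      exact Quotient.sound hrel
    exact Finite.of_surjective _ hsurjc
  -- combine into the hypothesis of lemK
  set E : Quotient (orbS f₁) ⊕ Quotient (orbS f₂) ≃ Quotient (orbS g₁) ⊕ Quotient (orbS g₂) :=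
    decf.trans (Ψ.trans decg.symm) with hE
  have hEper : ∀ z, Sum.elim (fun q : Quotient (orbS g₁) => Function.minimalPeriod g₁ q.out)
      (fun q : Quotient (orbS g₂) => Function.minimalPeriod g₂ q.out) (E z)
      = Sum.elim (fun q : Quotient (orbS f₁) => Function.minimalPeriod f₁ q.out)
      (fun q : Quotient (orbS f₂) => Function.minimalPeriod f₂ q.out) z := by
    intro z
    have h1 := hdecg (decg.symm (Ψ (decf z)))
    rw [decg.apply_symm_apply] at h1
    have h2 : E z = decg.symm (Ψ (decf z)) := rfl
    rw [h2, ← h1, hΨ, hdecf]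
  obtain ⟨E', hE'⟩ := lemK _ _ _ _ E hEper F hF
  obtain ⟨e₂, he₂⟩ := lemA f₂ g₂ E' hE'
  -- assemble the full permutation
  letI : DecidablePred (· ∈ C) := fun _ => Classical.dec _
  letI : DecidablePred (· ∈ D) := fun _ => Classical.dec _
  set W : Equiv.Perm ℕ := (Equiv.sumCompl (· ∈ C)).symm.trans
    ((Equiv.sumCongr w0e e₂).trans (Equiv.sumCompl (· ∈ D))) with hW
  have hWpos : ∀ (x : ℕ) (h : x ∈ C), W x = w0 x := by
    intro x h
    simp only [hW, Equiv.trans_apply]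
    rw [Equiv.sumCompl_symm_apply_of_pos (p := (· ∈ C)) h]
    rfl
  have hWneg : ∀ (x : ℕ) (h : ¬ x ∈ C), W x = (e₂ ⟨x, h⟩ : ℕ) := by
    intro x h
    simp only [hW, Equiv.trans_apply]
    rw [Equiv.sumCompl_symm_apply_of_neg (p := (· ∈ C)) h]
    rfl
  have hWint : ∀ x, W (f x) = g (W x) := by
    intro x
    by_cases h : x ∈ C
    · have hfx : f x ∈ C := (hCinv x).mp h
      rw [hWpos _ hfx, hWpos _ h]
      exact hw0int x h
    · have hfx : ¬ f x ∈ C := fun hf => h ((hCinv x).mpr hf)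
      rw [hWneg _ hfx, hWneg _ h]
      have h3 : (⟨f x, hfx⟩ : {x // ¬ x ∈ C}) = f₂ ⟨x, h⟩ := rfl
      rw [h3, he₂]
      rfl
  refine ⟨W, ?_, ?_⟩
  · intro j hj
    rw [hWpos j (hcC j hj)]
    exact hw0fix j hj
  · apply Equiv.ext
    intro x
    rw [Equiv.Perm.mul_apply, Equiv.Perm.mul_apply, hWint (W⁻¹ x)]
    rw [Equiv.Perm.coe_inv, Equiv.apply_symm_apply]

end LocalConjAux

theorem local_conjugacy_disjointness_aux
    (f g : Equiv.Perm ℕ) (hconj : ∃ v : Equiv.Perm ℕ, g = v * f * v⁻¹)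
    (c : Finset ℕ) :
    {k : Equiv.Perm ℕ | ∃ h : Equiv.Perm ℕ, (∀ j ∈ c, h j = j) ∧ k = h * f * h⁻¹} ∩
      {k : Equiv.Perm ℕ | ∃ h : Equiv.Perm ℕ, (∀ j ∈ c, h j = j) ∧ k = h * g * h⁻¹} = ∅ ↔
    ∃ k ∈ c, ∃ m : ℤ, ((f ^ m) k ∈ c ∨ (g ^ m) k ∈ c) ∧ (f ^ m) k ≠ (g ^ m) k := by
  constructor
  · intro hemp
    by_contra hno
    push_neg at hno
    obtain ⟨v, hv⟩ := hconj
    obtain ⟨w, hwc, hwfg⟩ := LocalConjAux.main_construction f g v hv c hno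
    have hmem : g ∈ ({k : Equiv.Perm ℕ | ∃ h : Equiv.Perm ℕ, (∀ j ∈ c, h j = j) ∧ k = h * f * h⁻¹} ∩
        {k : Equiv.Perm ℕ | ∃ h : Equiv.Perm ℕ, (∀ j ∈ c, h j = j) ∧ k = h * g * h⁻¹}) :=
      ⟨⟨w, hwc, hwfg.symm⟩, ⟨1, fun j _ => rfl, by simp⟩⟩
    rw [hemp] at hmem
    exact hmem
  · rintro ⟨k, hk, m, hor, hne⟩
    rw [Set.eq_empty_iff_forall_notMem]
    rintro q ⟨⟨h1, hc1, hq1⟩, ⟨h2, hc2, hq2⟩⟩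
    set u := h2⁻¹ * h1 with hu
    have hinvfix : ∀ (hh : Equiv.Perm ℕ), (∀ j ∈ c, hh j = j) → ∀ j ∈ c, hh⁻¹ j = j := by
      intro hh hfix j hj
      have := congrArg (⇑hh⁻¹) (hfix j hj)
      rw [Equiv.Perm.coe_inv, Equiv.symm_apply_apply] at this
      exact this.symm
    have huc : ∀ j ∈ c, u j = j := by
      intro j hj
      rw [hu, Equiv.Perm.mul_apply, hc1 j hj, hinvfix h2 hc2 j hj]
    have hg : g = u * f * u⁻¹ := by
      have heq : h1 * f * h1⁻¹ = h2 * g * h2⁻¹ := by rw [← hq1, hq2]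
      rw [hu]
      calc g = h2⁻¹ * (h2 * g * h2⁻¹) * h2 := by group
        _ = h2⁻¹ * (h1 * f * h1⁻¹) * h2 := by rw [heq]
        _ = (h2⁻¹ * h1) * f * (h2⁻¹ * h1)⁻¹ := by group
    have hgu : g ^ m = u * f ^ m * u⁻¹ := by
      rw [hg, ← MulAut.conj_apply, ← map_zpow, MulAut.conj_apply]
    have hgm : (g ^ m) k = u ((f ^ m) k) := by
      rw [hgu, Equiv.Perm.mul_apply, Equiv.Perm.mul_apply,
        hinvfix u huc k hk]
    rcases hor with hf | hgc
    · refine hne ?_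
      rw [hgm, huc _ hf]
    · refine hne ?_
      have : u⁻¹ ((g ^ m) k) = (f ^ m) k := by
        rw [hgm, Equiv.Perm.coe_inv, Equiv.symm_apply_apply]
      rw [← this, hinvfix u huc _ hgc]

/-- Disjointness criterion for local conjugacy classes in `S_∞`. -/
theorem local_conjugacy_disjointness
    (f g : Equiv.Perm ℕ) (hconj : ∃ v : Equiv.Perm ℕ, g = v * f * v⁻¹)
    (c : Finset ℕ) :
    {k : Equiv.Perm ℕ | ∃ h : Equiv.Perm ℕ, (∀ j ∈ c, h j = j) ∧ k = h * f * h⁻¹} ∩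
      {k : Equiv.Perm ℕ | ∃ h : Equiv.Perm ℕ, (∀ j ∈ c, h j = j) ∧ k = h * g * h⁻¹} = ∅ ↔
    ∃ k ∈ c, ∃ m : ℤ, ((f ^ m) k ∈ c ∨ (g ^ m) k ∈ c) ∧ (f ^ m) k ≠ (g ^ m) k :=
  local_conjugacy_disjointness_aux f g hconj c
end
end
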